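/- arXiv:2007.00468 — 4 statements merged into one kernel-verified Lean document; each statement's English description precedes it below -/
import Mathlib

section
/- Let Φ be a Young function and φ : (0,∞)→(0,∞) be almost decreasing with r ↦ φ(r)r^n almost increasing. Then there exists C ≥ 1 such that for every ball B = B(a,r) in ℝⁿ, 1/Φ⁻¹(φ(r)) ≤ ‖χ_B‖_{L^{(Φ,φ)}} ≤ C/Φ⁻¹(φ(r)). -/
open MeasureTheory Set Metric Filter NNReal ENNReal Topology

noncomputable section

/-- Generalized inverse in the sense of O'Neil. -/
def ginv (Φ : ℝ≥0∞ → ℝ≥0∞) (u : ℝ≥0∞) : ℝ≥0∞ :=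
  if u = ⊤ then ⊤ else sInf {t | u < Φ t}

/-- A Young function: increasing, convex, vanishing at 0, left continuous,
not identically zero nor identically infinite. -/
structure IsYoung (Φ : ℝ≥0∞ → ℝ≥0∞) : Prop where
  mono : Monotone Φ
  zero : Φ 0 = 0
  top : Φ ⊤ = ⊤
  conv : ∀ (x y : ℝ≥0∞) (a b : ℝ≥0), a + b = 1 →
    Φ ((a : ℝ≥0∞) * x + (b : ℝ≥0∞) * y) ≤ (a : ℝ≥0∞) * Φ x + (b : ℝ≥0∞) * Φ y
  lcont : ∀ t : ℝ≥0∞, t < sInf {s | Φ s = ⊤} →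
    Filter.Tendsto Φ (nhdsWithin t (Set.Iio t)) (nhds (Φ t))
  pos : ∃ t, 0 < t ∧ Φ t ≠ ⊤
  fin : ∃ t, t ≠ ⊤ ∧ Φ t ≠ 0

/-- `θ` is almost decreasing on `(0,∞)`. -/
def AlmostDecreasingOn (θ : ℝ → ℝ) : Prop :=
  ∃ C : ℝ, 0 < C ∧ ∀ r s : ℝ, 0 < r → r < s → θ s ≤ C * θ r

/-- `θ` is almost increasing on `(0,∞)`. -/
def AlmostIncreasingOn (θ : ℝ → ℝ) : Prop :=
  ∃ C : ℝ, 0 < C ∧ ∀ r s : ℝ, 0 < r → r < s → θ r ≤ C * θ s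

/-- The class `𝒢^dec`: positive, almost decreasing `φ` with `r ↦ φ(r) rⁿ` almost increasing. -/
def Gdec (n : ℕ) (φ : ℝ → ℝ) : Prop :=
  (∀ r : ℝ, 0 < r → 0 < φ r) ∧ AlmostDecreasingOn φ ∧
    AlmostIncreasingOn (fun r => φ r * r ^ n)

variable {n : ℕ}

/-- The Orlicz–Morrey "norm" of `f` on the ball `B(a,r)`. -/
def ballNorm (Φ : ℝ≥0∞ → ℝ≥0∞) (φ : ℝ → ℝ)
    (f : EuclideanSpace ℝ (Fin n) → ℝ) (a : EuclideanSpace ℝ (Fin n)) (r : ℝ) : ℝ≥0∞ :=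
  sInf {lam : ℝ≥0∞ | 0 < lam ∧
    (ENNReal.ofReal (φ r))⁻¹ * ((volume (ball a r))⁻¹ *
      ∫⁻ x in ball a r, Φ (ENNReal.ofReal |f x| / lam)) ≤ 1}

/-- The Orlicz–Morrey norm `‖f‖_{L^{(Φ,φ)}}`: supremum over all balls of `ballNorm`. -/
def omNorm (Φ : ℝ≥0∞ → ℝ≥0∞) (φ : ℝ → ℝ) (f : EuclideanSpace ℝ (Fin n) → ℝ) : ℝ≥0∞ :=
  ⨆ (a : EuclideanSpace ℝ (Fin n)) (r : ℝ) (_ : 0 < r), ballNorm Φ φ f a r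

/-- The Orlicz–Campanato norm `‖f‖_{𝓛^{(Φ,φ)}} = sup_B ‖f − f_B‖_{Φ,φ,B}`. -/
def campNorm (Φ : ℝ≥0∞ → ℝ≥0∞) (φ : ℝ → ℝ) (f : EuclideanSpace ℝ (Fin n) → ℝ) : ℝ≥0∞ :=
  ⨆ (a : EuclideanSpace ℝ (Fin n)) (r : ℝ) (_ : 0 < r),
    ballNorm Φ φ (fun x => f x - ⨍ y in ball a r, f y) a r

section Aux

variable {Φ : ℝ≥0∞ → ℝ≥0∞}

lemma young_scale (hY : IsYoung Φ) {c : ℝ≥0} (hc : 1 ≤ c) (t : ℝ≥0∞) :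
    Φ ((c : ℝ≥0∞)⁻¹ * t) ≤ (c : ℝ≥0∞)⁻¹ * Φ t := by
  have hc0 : c ≠ 0 := by intro h; simp [h] at hc
  have hle : c⁻¹ ≤ 1 := by
    rw [inv_le_one₀ (zero_lt_one.trans_le hc)]; exact hc
  have h := hY.conv t 0 c⁻¹ (1 - c⁻¹) (by rw [add_tsub_cancel_of_le hle])
  simpa [hY.zero, ENNReal.coe_inv hc0] using h

lemma ginv_pos (hY : IsYoung Φ) {u : ℝ≥0∞} (hu : 0 < u) : 0 < ginv Φ u := by
  unfold ginv
  split_ifs with h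
  · exact zero_lt_top
  obtain ⟨t0, ht0, ht0fin⟩ := hY.pos
  obtain ⟨a, ha0, ha1, hau⟩ : ∃ a : ℝ≥0, a ≠ 0 ∧ a ≤ 1 ∧ (a : ℝ≥0∞) * Φ t0 < u := by
    rcases eq_or_ne (Φ t0) 0 with h0 | h0
    · exact ⟨1, one_ne_zero, le_rfl, by simp [h0, hu]⟩
    · have hdiv : (0:ℝ≥0∞) < u / Φ t0 := ENNReal.div_pos hu.ne' ht0fin
      obtain ⟨k, hk⟩ := ENNReal.exists_inv_two_pow_lt hdiv.ne'
      refine ⟨(2:ℝ≥0)⁻¹ ^ k, by positivity, pow_le_one₀ (by positivity) (by norm_num), ?_⟩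
      have h2 : ((2:ℝ≥0)⁻¹ ^ k : ℝ≥0∞) < u / Φ t0 := by
        convert hk using 2 <;> simp
      calc ((2:ℝ≥0)⁻¹ ^ k : ℝ≥0∞) * Φ t0 < (u / Φ t0) * Φ t0 :=
            ENNReal.mul_lt_mul_left h0 ht0fin h2
        _ = u := ENNReal.div_mul_cancel h0 ht0fin
  have hsc := hY.conv t0 0 a (1 - a) (by rw [add_tsub_cancel_of_le ha1])
  have hΦa : Φ ((a:ℝ≥0∞) * t0) < u := by
    refine lt_of_le_of_lt ?_ hau
    simpa [hY.zero] using hsc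
  have hlb : (a:ℝ≥0∞) * t0 ≤ sInf {t | u < Φ t} := by
    apply le_sInf
    intro t ht
    by_contra hlt
    push_neg at hlt
    exact absurd (lt_of_lt_of_le ht.out (hY.mono hlt.le)) hΦa.not_gt
  refine lt_of_lt_of_le ?_ hlb
  exact ENNReal.mul_pos (by exact_mod_cast ha0) ht0.ne'

lemma ginv_lt_top (hY : IsYoung Φ) {u : ℝ≥0∞} (hu : u ≠ ⊤) : ginv Φ u < ⊤ := by
  unfold ginv
  rw [if_neg hu]
  obtain ⟨t1, ht1top, ht1pos⟩ := hY.fin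
  rcases eq_or_ne (Φ t1) ⊤ with hc | hc
  · exact lt_of_le_of_lt (sInf_le (by simp [hc, lt_top_iff_ne_top, hu]))
      (lt_top_iff_ne_top.2 ht1top)
  have hdivtop : u / Φ t1 < ⊤ := ENNReal.div_lt_top hu ht1pos
  obtain ⟨k, hk⟩ := ENNReal.exists_nat_gt hdivtop.ne
  have hk1 : 1 ≤ k := by
    rcases Nat.eq_zero_or_pos k with h | h
    · subst h; simp at hk
    · exact h
  have hkinv : ((k:ℝ≥0))⁻¹ ≤ 1 := by
    rw [inv_le_one₀ (by exact_mod_cast Nat.lt_of_lt_of_le Nat.zero_lt_one hk1)]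
    exact_mod_cast hk1
  have hk0 : ((k:ℝ≥0) : ℝ≥0∞) ≠ 0 := by exact_mod_cast Nat.one_le_iff_ne_zero.1 hk1
  have hkc : ((k:ℝ≥0):ℝ≥0∞)⁻¹ * (((k:ℝ≥0):ℝ≥0∞) * t1) = t1 := by
    rw [← mul_assoc, ENNReal.inv_mul_cancel hk0 (by simp), one_mul]
  have h2 := hY.conv (((k:ℝ≥0):ℝ≥0∞) * t1) 0 (k:ℝ≥0)⁻¹ (1 - (k:ℝ≥0)⁻¹)
    (by rw [add_tsub_cancel_of_le hkinv])
  rw [ENNReal.coe_inv (by exact_mod_cast Nat.one_le_iff_ne_zero.1 hk1)] at h2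
  simp only [hY.zero, mul_zero, add_zero, hkc] at h2
  have hukt : u < Φ (((k:ℝ≥0):ℝ≥0∞) * t1) := by
    have hu' : u < (k:ℝ≥0∞) * Φ t1 := by
      rw [ENNReal.div_lt_iff (Or.inl ht1pos) (Or.inl hc)] at hk
      exact_mod_cast hk
    rw [show ((k:ℕ):ℝ≥0∞) = ((k:ℝ≥0):ℝ≥0∞) by simp] at hu'
    refine hu'.trans_le ?_
    calc ((k:ℝ≥0):ℝ≥0∞) * Φ t1 ≤ ((k:ℝ≥0):ℝ≥0∞) * (((k:ℝ≥0):ℝ≥0∞)⁻¹ * Φ (((k:ℝ≥0):ℝ≥0∞) * t1)) := by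
          exact mul_le_mul_right (by exact_mod_cast h2) _
      _ = Φ (((k:ℝ≥0):ℝ≥0∞) * t1) := by
          rw [← mul_assoc, ENNReal.mul_inv_cancel hk0 (by simp), one_mul]
  refine lt_of_le_of_lt (sInf_le hukt) ?_
  exact ENNReal.mul_lt_top coe_lt_top (lt_top_iff_ne_top.2 ht1top)

lemma Phi_le_of_lt_ginv (hY : IsYoung Φ) {u t : ℝ≥0∞} (hu : u ≠ ⊤) (ht : t < ginv Φ u) :
    Φ t ≤ u := by
  by_contra h
  push_neg at h
  have : ginv Φ u ≤ t := by
    unfold ginv; rw [if_neg hu]; exact sInf_le h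
  exact absurd ht this.not_gt

lemma integ_eq {n : ℕ} (hY : IsYoung Φ)
    (a b : EuclideanSpace ℝ (Fin n)) (r s : ℝ) (lam : ℝ≥0∞) :
    (∫⁻ x in ball b s, Φ (ENNReal.ofReal |((ball a r).indicator fun _ => (1:ℝ)) x| / lam))
      = Φ lam⁻¹ * volume (ball a r ∩ ball b s) := by
  have hpt : ∀ x, Φ (ENNReal.ofReal |((ball a r).indicator fun _ => (1:ℝ)) x| / lam)
      = (ball a r).indicator (fun _ => Φ lam⁻¹) x := by
    intro x
    by_cases hx : x ∈ ball a r
    · simp [hx, one_div]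
    · simp [hx, hY.zero]
  simp_rw [hpt]
  rw [lintegral_indicator measurableSet_ball, setLIntegral_const,
    Measure.restrict_apply measurableSet_ball]

lemma vol_ball_eq {n : ℕ} (x : EuclideanSpace ℝ (Fin n)) {r : ℝ} (hr : 0 < r) :
    volume (ball x r)
      = ENNReal.ofReal (r ^ n) * volume (ball (0 : EuclideanSpace ℝ (Fin n)) 1) := by
  rcases Nat.eq_zero_or_pos n with h | h
  · subst h
    have huniv : ∀ (y : EuclideanSpace ℝ (Fin 0)) (ρ : ℝ), 0 < ρ → ball y ρ = univ := by
      intro y ρ hρ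
      ext z
      simp [mem_ball, show z = y from Subsingleton.elim z y, hρ]
    rw [huniv x r hr, huniv 0 1 one_pos]
    simp
  · have : Nontrivial (EuclideanSpace ℝ (Fin n)) := by
      refine ⟨EuclideanSpace.single ⟨0, h⟩ (1:ℝ), 0, ?_⟩
      intro hcontra
      have := congrArg (fun v => v ⟨0, h⟩) hcontra
      simp at this
    rw [Measure.addHaar_ball volume x hr.le, finrank_euclideanSpace_fin]
end Aux

/-- for a Young function `Φ` and `φ ∈ 𝒢^dec`, `‖χ_{B(a,r)}‖_{L^{(Φ,φ)}}`
is comparable to `1/Φ⁻¹(φ(r))`. -/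
theorem stmt5 {n : ℕ} (Φ : ℝ≥0∞ → ℝ≥0∞) (hY : IsYoung Φ) (φ : ℝ → ℝ)
    (hφpos : ∀ r : ℝ, 0 < r → 0 < φ r) (hφdec : AlmostDecreasingOn φ)
    (hφinc : AlmostIncreasingOn (fun r => φ r * r ^ n)) :
    ∃ C : ℝ≥0∞, 1 ≤ C ∧ C ≠ ⊤ ∧ ∀ (a : EuclideanSpace ℝ (Fin n)) (r : ℝ), 0 < r →
      (ginv Φ (ENNReal.ofReal (φ r)))⁻¹ ≤
        omNorm Φ φ ((ball a r).indicator fun _ => (1 : ℝ)) ∧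
      omNorm Φ φ ((ball a r).indicator fun _ => (1 : ℝ)) ≤
        C * (ginv Φ (ENNReal.ofReal (φ r)))⁻¹ := by
  obtain ⟨C₁, hC₁, hdec⟩ := hφdec
  obtain ⟨C₂, hC₂, hinc⟩ := hφinc
  set creal : ℝ := max 1 (max C₁ C₂) with hcreal
  have hcreal1 : (1:ℝ) ≤ creal := le_max_left _ _
  set c : ℝ≥0 := creal.toNNReal with hcdef
  have hc1 : (1:ℝ≥0) ≤ c := by
    rw [hcdef, ← Real.toNNReal_one]
    exact Real.toNNReal_mono hcreal1
  have hc0 : (c:ℝ≥0∞) ≠ 0 := by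
    simp only [ne_eq, ENNReal.coe_eq_zero]
    intro h; rw [h] at hc1; exact absurd hc1 (by norm_num)
  have hcoe : ENNReal.ofReal creal = (c : ℝ≥0∞) := rfl
  refine ⟨(c : ℝ≥0∞), by exact_mod_cast hc1, coe_ne_top, ?_⟩
  intro a r hr
  set u := ENNReal.ofReal (φ r) with hudef
  have hu0 : 0 < u := ENNReal.ofReal_pos.2 (hφpos r hr)
  have hutop : u ≠ ⊤ := ofReal_ne_top
  set g := ginv Φ u with hgdef
  have hg0 : 0 < g := ginv_pos hY hu0
  have hgtop : g < ⊤ := ginv_lt_top hY hutop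
  constructor
  · -- LOWER BOUND
    have h1 : g⁻¹ ≤ ballNorm Φ φ ((ball a r).indicator fun _ => (1:ℝ)) a r := by
      apply le_sInf
      rintro lam ⟨hlam0, hlam⟩
      rw [integ_eq (Φ := Φ) hY a a r r lam, inter_self] at hlam
      have hv0 : volume (ball a r) ≠ 0 := (measure_ball_pos volume a hr).ne'
      have hvt : volume (ball a r) ≠ ⊤ := measure_ball_lt_top.ne
      rw [mul_comm (Φ lam⁻¹) (volume (ball a r)),
        ← mul_assoc (volume (ball a r))⁻¹ (volume (ball a r)) (Φ lam⁻¹),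
        ENNReal.inv_mul_cancel hv0 hvt, one_mul] at hlam
      have hΦ : Φ lam⁻¹ ≤ u := by
        calc Φ lam⁻¹ = u * (u⁻¹ * Φ lam⁻¹) := by
              rw [← mul_assoc, ENNReal.mul_inv_cancel hu0.ne' hutop, one_mul]
          _ ≤ u * 1 := mul_le_mul_right hlam _
          _ = u := mul_one u
      have hle : lam⁻¹ ≤ g := by
        rw [hgdef]; unfold ginv; rw [if_neg hutop]
        apply le_sInf
        intro t ht
        by_contra hlt
        push_neg at hlt
        exact absurd (lt_of_lt_of_le ht.out ((hY.mono hlt.le).trans hΦ)) (lt_irrefl u)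
      calc g⁻¹ ≤ (lam⁻¹)⁻¹ := ENNReal.inv_le_inv.2 hle
        _ = lam := inv_inv lam
    exact h1.trans (le_iSup_of_le a (le_iSup_of_le r (le_iSup_of_le hr le_rfl)))
  · -- UPPER BOUND
    refine iSup_le fun b => iSup_le fun s => iSup_le fun hs => ?_
    refine le_of_forall_gt_imp_ge_of_dense fun μ hμ => ?_
    have hCg0 : (0:ℝ≥0∞) < (c:ℝ≥0∞) * g⁻¹ :=
      ENNReal.mul_pos hc0 (ENNReal.inv_ne_zero.2 hgtop.ne)
    have hμ0 : μ ≠ 0 := (hCg0.trans hμ).ne'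
    have hdivlt : (c:ℝ≥0∞) / μ < g := by
      rw [ENNReal.div_lt_iff (Or.inl hμ0) (Or.inr coe_ne_top)]
      calc (c:ℝ≥0∞) = g * ((c:ℝ≥0∞) * g⁻¹) := by
            rw [mul_comm (c:ℝ≥0∞) g⁻¹, ← mul_assoc, ENNReal.mul_inv_cancel hg0.ne' hgtop.ne,
              one_mul]
        _ < g * μ := ENNReal.mul_lt_mul_right hg0.ne' hgtop.ne hμ
    obtain ⟨t, ht1, ht2⟩ := exists_between hdivlt
    have ht0 : 0 < t := lt_of_le_of_lt (zero_le (a := _)) ht1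
    have httop : t ≠ ⊤ := (ht2.trans hgtop).ne
    set lam : ℝ≥0∞ := (c:ℝ≥0∞) * t⁻¹ with hlamdef
    have hlamμ : lam ≤ μ := by
      rw [ENNReal.div_lt_iff (Or.inl hμ0) (Or.inr coe_ne_top)] at ht1
      calc lam = (c:ℝ≥0∞) * t⁻¹ := rfl
        _ ≤ (t * μ) * t⁻¹ := mul_le_mul_left ht1.le _
        _ = μ * (t * t⁻¹) := by ring
        _ = μ := by rw [ENNReal.mul_inv_cancel ht0.ne' httop, mul_one]
    refine le_trans ?_ hlamμ
    apply sInf_le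
    have hlaminv : lam⁻¹ = (c:ℝ≥0∞)⁻¹ * t := by
      rw [hlamdef, ENNReal.mul_inv (Or.inr (ENNReal.inv_ne_top.2 ht0.ne')) (Or.inl coe_ne_top),
        inv_inv]
    constructor
    · exact ENNReal.mul_pos hc0 (ENNReal.inv_ne_zero.2 httop)
    rw [integ_eq (Φ := Φ) hY a b r s lam]
    set m := volume (ball a r ∩ ball b s) with hmdef
    set us := ENNReal.ofReal (φ s) with husdef
    set vB := volume (ball b s) with hvBdef
    have hus0 : us ≠ 0 := (ENNReal.ofReal_pos.2 (hφpos s hs)).ne'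
    have hustop : us ≠ ⊤ := ofReal_ne_top
    have hvB0 : vB ≠ 0 := (measure_ball_pos volume b hs).ne'
    have hvBtop : vB ≠ ⊤ := measure_ball_lt_top.ne
    set v₁ := volume (ball (0 : EuclideanSpace ℝ (Fin n)) 1) with hv₁def
    -- main inequality : u * m ≤ c * (us * vB)
    have main : u * m ≤ (c:ℝ≥0∞) * (us * vB) := by
      have hvB : vB = ENNReal.ofReal (s ^ n) * v₁ := vol_ball_eq b hs
      rcases le_or_gt r s with hle | hlt
      · -- r ≤ s : use m ≤ vol (ball a r)
        have hm : m ≤ ENNReal.ofReal (r ^ n) * v₁ := by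
          rw [← vol_ball_eq a hr]
          exact measure_mono inter_subset_left
        have hreal : φ r * r ^ n ≤ creal * (φ s * s ^ n) := by
          rcases eq_or_lt_of_le hle with heq | hlt'
          · subst heq
            have hp : 0 ≤ φ r * r ^ n := mul_nonneg (hφpos r hr).le (pow_nonneg hr.le n)
            exact le_mul_of_one_le_left hp hcreal1
          · calc φ r * r ^ n ≤ C₂ * (φ s * s ^ n) := hinc r s hr hlt'
              _ ≤ creal * (φ s * s ^ n) := by
                  apply mul_le_mul_of_nonneg_right ((le_max_right C₁ C₂).trans (le_max_right _ _))
                  exact mul_nonneg (hφpos s hs).le (pow_nonneg (hr.trans hlt').le n)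
        calc u * m ≤ ENNReal.ofReal (φ r) * (ENNReal.ofReal (r ^ n) * v₁) :=
              mul_le_mul_right hm _
          _ = ENNReal.ofReal (φ r * r ^ n) * v₁ := by
              rw [ENNReal.ofReal_mul (hφpos r hr).le, mul_assoc]
          _ ≤ ENNReal.ofReal (creal * (φ s * s ^ n)) * v₁ := by
              exact mul_le_mul_left (ENNReal.ofReal_le_ofReal hreal) _
          _ = (c:ℝ≥0∞) * (us * vB) := by
              rw [ENNReal.ofReal_mul (by linarith), hcoe,
                ENNReal.ofReal_mul (hφpos s hs).le, hvB, husdef]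
              ring
      · -- s < r : use m ≤ vB
        have hm : m ≤ vB := measure_mono inter_subset_right
        have hreal : φ r ≤ creal * φ s := by
          calc φ r ≤ C₁ * φ s := hdec s r hs hlt
            _ ≤ creal * φ s := by
                apply mul_le_mul_of_nonneg_right ((le_max_left C₁ C₂).trans (le_max_right _ _))
                exact (hφpos s hs).le
        calc u * m ≤ u * vB := mul_le_mul_right hm _
          _ ≤ ENNReal.ofReal (creal * φ s) * vB :=
              mul_le_mul_left (ENNReal.ofReal_le_ofReal hreal) _
          _ = (c:ℝ≥0∞) * (us * vB) := by
              rw [ENNReal.ofReal_mul (by linarith), hcoe, mul_assoc]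
    -- key : Φ lam⁻¹ * m ≤ us * vB
    have key : Φ lam⁻¹ * m ≤ us * vB := by
      have hΦt : Φ t ≤ u := Phi_le_of_lt_ginv hY hutop ht2
      have h1 : Φ lam⁻¹ ≤ (c:ℝ≥0∞)⁻¹ * u := by
        rw [hlaminv]
        exact (young_scale hY hc1 t).trans (mul_le_mul_right hΦt _)
      calc Φ lam⁻¹ * m ≤ ((c:ℝ≥0∞)⁻¹ * u) * m := mul_le_mul_left h1 _
        _ = (c:ℝ≥0∞)⁻¹ * (u * m) := by ring
        _ ≤ (c:ℝ≥0∞)⁻¹ * ((c:ℝ≥0∞) * (us * vB)) := mul_le_mul_right main _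
        _ = us * vB := by
            rw [← mul_assoc, ENNReal.inv_mul_cancel hc0 coe_ne_top, one_mul]
    calc us⁻¹ * (vB⁻¹ * (Φ lam⁻¹ * m)) ≤ us⁻¹ * (vB⁻¹ * (us * vB)) := by
          exact mul_le_mul_right (mul_le_mul_right key _) _
      _ = 1 := by
          rw [mul_comm us vB, ← mul_assoc vB⁻¹, ENNReal.inv_mul_cancel hvB0 hvBtop, one_mul,
            ENNReal.inv_mul_cancel hus0 hustop]
end
end

section
/- Let Φ be a Young function satisfying the ∇₂-condition (there exists k>1 with Φ(t) ≤ Φ(kt)/(2k) for all t>0). Then there exist p ∈ (1,∞) and C > 0 such that for all balls B = B(a,r), all φ:(0,∞)→(0,∞), and all measurable f, ((1/|B|)∫_B |f|^p)^{1/p} ≤ C Φ⁻¹(φ(r)) ‖f‖_{Φ,φ,B}. -/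
open MeasureTheory Set Metric Filter NNReal ENNReal Topology

noncomputable section

variable {n : ℕ}

/-- if `Φ ∈ ∇₂` then there are `p ∈ (1,∞)` and `C > 0` with
`(⨍_B |f|^p)^{1/p} ≤ C Φ⁻¹(φ(r)) ‖f‖_{Φ,φ,B}` for all balls, all `φ` and all `f`. -/
theorem stmt7 {n : ℕ} (Φ : ℝ≥0∞ → ℝ≥0∞) (hY : IsYoung Φ)
    (hnabla : ∃ k : ℝ≥0, 1 < k ∧ ∀ t : ℝ≥0∞, 0 < t →
      2 * (k : ℝ≥0∞) * Φ t ≤ Φ ((k : ℝ≥0∞) * t)) :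
    ∃ p : ℝ, 1 < p ∧ ∃ C : ℝ, 0 < C ∧
      ∀ (φ : ℝ → ℝ), (∀ r : ℝ, 0 < r → 0 < φ r) →
      ∀ (f : EuclideanSpace ℝ (Fin n) → ℝ) (a : EuclideanSpace ℝ (Fin n)) (r : ℝ), 0 < r →
        ((volume (ball a r))⁻¹ * ∫⁻ x in ball a r, ENNReal.ofReal |f x| ^ p) ^ (1 / p) ≤
          ENNReal.ofReal C * ginv Φ (ENNReal.ofReal (φ r)) * ballNorm Φ φ f a r := by
  obtain ⟨k, hk1, hk⟩ := hnabla
  set K : ℝ≥0∞ := (k : ℝ≥0∞) with hK_def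
  have hK1 : 1 < K := by rw [hK_def]; exact_mod_cast hk1
  have hK0 : K ≠ 0 := (lt_trans one_pos hK1).ne'
  have hKt : K ≠ ⊤ := coe_ne_top
  have hk0 : (0:ℝ) < (k:ℝ) := lt_trans one_pos hk1
  set p : ℝ := Real.logb k (2 * k) with hp_def
  have hp1 : 1 < p := by
    have h1 : Real.logb k k = 1 := Real.logb_self_eq_one (by exact_mod_cast hk1)
    rw [hp_def, ← h1]
    apply Real.logb_lt_logb (by exact_mod_cast hk1) hk0
    linarith
  have hp0 : 0 < p := lt_trans one_pos hp1
  have hKp : K ^ p = 2 * K := by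
    have h1 : ((k : ℝ) : ℝ) ^ p = 2 * (k:ℝ) := by
      have := Real.rpow_logb hk0 (by exact_mod_cast hk1.ne') (by linarith : (0:ℝ) < 2 * k)
      simpa [hp_def] using this
    have h2 : (k ^ p : ℝ≥0) = 2 * k := by
      ext
      rw [NNReal.coe_rpow]
      simpa using h1
    rw [hK_def, ← ENNReal.coe_rpow_of_ne_zero (by exact_mod_cast hk0.ne'), h2]
    push_cast
    ring
  -- iteration of the ∇₂ condition
  have iter : ∀ (m : ℕ) (t : ℝ≥0∞), 0 < t → (2 * K) ^ m * Φ t ≤ Φ (K ^ m * t) := by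
    intro m
    induction m with
    | zero => intro t _; simp
    | succ m ih =>
      intro t ht
      have h1 : (0:ℝ≥0∞) < K ^ m * t := by
        apply ENNReal.mul_pos (pow_ne_zero m hK0) ht.ne'
      calc (2 * K) ^ (m + 1) * Φ t = 2 * K * ((2 * K) ^ m * Φ t) := by ring
        _ ≤ 2 * K * Φ (K ^ m * t) := by gcongr; exact ih t ht
        _ ≤ Φ (K * (K ^ m * t)) := hk _ h1
        _ = Φ (K ^ (m + 1) * t) := by ring_nf
  refine ⟨p, hp1, 2 * k, by positivity, ?_⟩
  intro φ hφ f a r hr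
  set B := ball a r with hB_def
  have hB0 : volume B ≠ 0 := (measure_ball_pos volume a hr).ne'
  have hBt : volume B ≠ ⊤ := measure_ball_lt_top.ne
  set v : ℝ≥0∞ := ENNReal.ofReal (φ r) with hv_def
  have hv0 : v ≠ 0 := (ENNReal.ofReal_pos.2 (hφ r hr)).ne'
  have hvt : v ≠ ⊤ := ofReal_ne_top
  set u : ℝ≥0∞ := sInf {t | v < Φ t} with hu_def
  have hginv : ginv Φ v = u := by rw [ginv, if_neg hvt]
  -- everything above u is mapped above v
  have hgt : ∀ t : ℝ≥0∞, u < t → v < Φ t := by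
    intro t ht
    obtain ⟨s, hs, hst⟩ := sInf_lt_iff.mp (hu_def ▸ ht)
    have hvs : v < Φ s := hs
    exact lt_of_lt_of_le hvs (hY.mono hst.le)
  -- u is positive
  have hu0 : 0 < u := by
    obtain ⟨t0, ht0, ht0t⟩ := hY.pos
    -- find t1 > 0 with Φ t1 ≤ v
    obtain ⟨t1, ht1, ht1v⟩ : ∃ t1 : ℝ≥0∞, 0 < t1 ∧ Φ t1 ≤ v := by
      rcases eq_or_ne (Φ t0) 0 with h | h
      · exact ⟨t0, ht0, h ▸ (zero_le : 0 ≤ v)⟩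
      · obtain ⟨a', ha0, ha⟩ := ENNReal.lt_iff_exists_nnreal_btwn.mp
          (show (0:ℝ≥0∞) < min 1 (v / Φ t0) by
            apply lt_min one_pos
            exact ENNReal.div_pos hv0 ht0t)
        have ha1 : (a' : ℝ≥0∞) < 1 := lt_of_lt_of_le ha (min_le_left _ _)
        have ha1' : a' ≤ 1 := by exact_mod_cast ha1.le
        have hΦa : (a' : ℝ≥0∞) * Φ t0 ≤ v := by
          calc (a' : ℝ≥0∞) * Φ t0 ≤ (v / Φ t0) * Φ t0 := by
                gcongr
                exact (lt_of_lt_of_le ha (min_le_right _ _)).le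
            _ = v := ENNReal.div_mul_cancel h ht0t
        refine ⟨(a' : ℝ≥0∞) * t0, ?_, ?_⟩
        · exact ENNReal.mul_pos (by exact_mod_cast ha0.ne') ht0.ne'
        · have hconv := hY.conv t0 0 a' (1 - a') (add_tsub_cancel_of_le ha1')
          simp only [mul_zero, add_zero, hY.zero] at hconv
          exact le_trans hconv hΦa
    rw [hu_def]
    apply lt_of_lt_of_le ht1 (le_sInf ?_)
    intro s hs
    have hvs : v < Φ s := hs
    by_contra hcon
    push_neg at hcon
    exact absurd hvs (not_lt.2 (le_trans (hY.mono hcon.le) ht1v))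
  -- u is finite
  have hut : u < ⊤ := by
    obtain ⟨t1, ht1t, ht1⟩ := hY.fin
    have ht10 : 0 < t1 := by
      rcases eq_or_ne t1 0 with h | h
      · exact absurd (h ▸ hY.zero) ht1
      · exact pos_iff_ne_zero.mpr h
    rcases eq_or_ne (Φ t1) ⊤ with h | h
    · refine lt_of_le_of_lt (sInf_le ?_) ht1t.lt_top
      show v < Φ t1
      rw [h]; exact hvt.lt_top
    · -- Φ t1 ∈ (0, ∞); iterate ∇₂ to exceed v
      obtain ⟨N, hN⟩ := ENNReal.exists_nat_gt (show v / Φ t1 ≠ ⊤ from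
        (ENNReal.div_lt_top hvt ht1).ne)
      have h2N : v / Φ t1 < 2 ^ N := lt_of_lt_of_le hN (by exact_mod_cast (Nat.lt_two_pow_self (n := N)).le)
      have hvlt : v < 2 ^ N * Φ t1 :=
        (ENNReal.div_lt_iff (Or.inl ht1) (Or.inl h)).1 h2N
      have h2le : (2:ℝ≥0∞) ≤ 2 * K := le_mul_of_one_le_right' hK1.le
      have hstep : v < Φ (K ^ N * t1) := by
        calc v < 2 ^ N * Φ t1 := hvlt
          _ ≤ (2 * K) ^ N * Φ t1 := by gcongr
          _ ≤ Φ (K ^ N * t1) := iter N t1 ht10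
      refine lt_of_le_of_lt (sInf_le hstep) ?_
      exact ENNReal.mul_lt_top (pow_lt_top (n := N) hKt.lt_top) ht1t.lt_top
  have hu0' : u ≠ 0 := hu0.ne'
  have hut' : u ≠ ⊤ := hut.ne
  have hup0 : u ^ p ≠ 0 := (ENNReal.rpow_pos hu0 hut').ne'
  have hupt : u ^ p ≠ ⊤ := ENNReal.rpow_ne_top_of_nonneg hp0.le hut'
  have hKp0 : K ^ p ≠ 0 := (ENNReal.rpow_pos (pos_iff_ne_zero.mpr hK0) hKt).ne'
  have hKpt : K ^ p ≠ ⊤ := ENNReal.rpow_ne_top_of_nonneg hp0.le hKt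
  -- the key pointwise claim
  have claimB : ∀ g : ℝ≥0∞, g ^ p * v ≤ K ^ p * u ^ p * (v + Φ g) := by
    intro g
    by_cases hgu : g ≤ K * u
    · calc g ^ p * v ≤ (K * u) ^ p * v := by gcongr
        _ = K ^ p * u ^ p * v := by rw [ENNReal.mul_rpow_of_nonneg _ _ hp0.le]
        _ ≤ K ^ p * u ^ p * (v + Φ g) := by gcongr; exact le_self_add
    · push_neg at hgu
      rcases eq_or_ne g ⊤ with hg | hg
      · have hΦg : Φ g = ⊤ := by rw [hg]; exact hY.top
        rw [hΦg, add_top, ENNReal.mul_top (mul_ne_zero hKp0 hup0)]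
        exact le_top
      · have hmex : ∃ m : ℕ, g ≤ K ^ (m + 1) * u := by
          obtain ⟨N, hN⟩ := ENNReal.exists_nat_gt (show g / u ≠ ⊤ from
            (ENNReal.div_lt_top hg hu0').ne)
          obtain ⟨M, hM⟩ := pow_unbounded_of_one_lt (N : ℝ≥0) hk1
          refine ⟨M, ?_⟩
          have hNK : (N : ℝ≥0∞) ≤ K ^ M := by
            rw [hK_def, ← ENNReal.coe_pow]
            exact_mod_cast hM.le
          have hKM : (K:ℝ≥0∞) ^ M ≤ K ^ (M + 1) := by
            rw [pow_succ]
            exact le_mul_of_one_le_right' hK1.le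
          calc g = (g / u) * u := (ENNReal.div_mul_cancel hu0' hut').symm
            _ ≤ (N : ℝ≥0∞) * u := mul_le_mul_left hN.le u
            _ ≤ K ^ (M + 1) * u := mul_le_mul_left (le_trans hNK hKM) u
        set m := Nat.find hmex with hm_def
        have h1 : g ≤ K ^ (m + 1) * u := Nat.find_spec hmex
        have hm1 : 1 ≤ m := by
          by_contra hcon
          push_neg at hcon
          have hm0 : m = 0 := by omega
          rw [hm0, zero_add, pow_one] at h1
          exact absurd h1 hgu.not_ge
        have h2 : K ^ m * u < g := by
          have hmin := Nat.find_min hmex (show m - 1 < m by omega)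
          push_neg at hmin
          have hms : m - 1 + 1 = m := by omega
          rwa [hms] at hmin
        have hKm0 : (K:ℝ≥0∞) ^ m ≠ 0 := pow_ne_zero m hK0
        have hKmt : (K:ℝ≥0∞) ^ m ≠ ⊤ := (pow_lt_top (n := m) hKt.lt_top).ne
        have ht : u < g / K ^ m := by
          rw [ENNReal.lt_div_iff_mul_lt (Or.inl hKm0) (Or.inl hKmt), mul_comm]
          exact h2
        have hΦ : (2 * K) ^ m * v ≤ Φ g := by
          have hiter := iter m (g / K ^ m) (lt_trans hu0 ht)
          rw [ENNReal.mul_div_cancel hKm0 hKmt] at hiter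
          calc (2 * K) ^ m * v ≤ (2 * K) ^ m * Φ (g / K ^ m) := by
                gcongr
                exact (hgt _ ht).le
            _ ≤ Φ g := hiter
        have hpow : (K ^ (m + 1) * u) ^ p = K ^ p * ((K ^ p) ^ m * u ^ p) := by
          rw [ENNReal.mul_rpow_of_nonneg _ _ hp0.le]
          rw [← ENNReal.rpow_natCast K (m+1), ← ENNReal.rpow_mul,
            ← ENNReal.rpow_natCast (K ^ p) m, ← ENNReal.rpow_mul]
          have hexp : ((m+1 : ℕ) : ℝ) * p = p + p * (m:ℝ) := by push_cast; ring
          rw [hexp, ENNReal.rpow_add _ _ hK0 hKt, mul_assoc]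
        calc g ^ p * v ≤ (K ^ (m + 1) * u) ^ p * v := by gcongr
          _ = K ^ p * u ^ p * ((K ^ p) ^ m * v) := by rw [hpow]; ring
          _ = K ^ p * u ^ p * ((2 * K) ^ m * v) := by rw [hKp]
          _ ≤ K ^ p * u ^ p * Φ g := by gcongr
          _ ≤ K ^ p * u ^ p * (v + Φ g) := by gcongr; exact le_add_self
  -- main per-λ bound
  set L := ((volume B)⁻¹ * ∫⁻ x in B, ENNReal.ofReal |f x| ^ p) ^ (1 / p) with hL_def
  set c : ℝ≥0∞ := 2 * K * u with hc_def
  have hc0 : c ≠ 0 := by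
    rw [hc_def]
    exact mul_ne_zero (mul_ne_zero two_ne_zero hK0) hu0'
  have hct : c ≠ ⊤ := by
    rw [hc_def]
    exact ENNReal.mul_ne_top (ENNReal.mul_ne_top ofNat_ne_top hKt) hut'
  have key : ∀ lam : ℝ≥0∞, (0 < lam ∧
      v⁻¹ * ((volume B)⁻¹ * ∫⁻ x in B, Φ (ENNReal.ofReal |f x| / lam)) ≤ 1) →
      L ≤ c * lam := by
    rintro lam ⟨hlam0, hlam⟩
    rcases eq_or_ne lam ⊤ with hlt | hlt
    · rw [hlt, ENNReal.mul_top hc0]; exact le_top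
    -- the integral bound
    have hI : (∫⁻ x in B, Φ (ENNReal.ofReal |f x| / lam)) ≤ v * volume B := by
      by_contra hcon
      push_neg at hcon
      have h1 : (1:ℝ≥0∞) < v⁻¹ * ((volume B)⁻¹ * ∫⁻ x in B, Φ (ENNReal.ofReal |f x| / lam)) := by
        calc (1:ℝ≥0∞) = v⁻¹ * ((volume B)⁻¹ * (v * volume B)) := by
              rw [mul_comm v (volume B), ← mul_assoc (volume B)⁻¹ (volume B) v,
                ENNReal.inv_mul_cancel hB0 hBt, one_mul, ENNReal.inv_mul_cancel hv0 hvt]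
          _ < _ := by
              apply (ENNReal.mul_lt_mul_iff_right (ENNReal.inv_ne_zero.2 hvt)
                (ENNReal.inv_ne_top.2 hv0)).2
              apply (ENNReal.mul_lt_mul_iff_right (ENNReal.inv_ne_zero.2 hBt)
                (ENNReal.inv_ne_top.2 hB0)).2
              exact hcon
      exact absurd hlam h1.not_ge
    have hlp0 : lam ^ p ≠ 0 := (ENNReal.rpow_pos hlam0 hlt).ne'
    have hlpt : lam ^ p ≠ ⊤ := ENNReal.rpow_ne_top_of_nonneg hp0.le hlt
    -- step 1: integrate the pointwise claim
    have step1 : (∫⁻ x in B, (ENNReal.ofReal |f x| / lam) ^ p) * v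
        ≤ K ^ p * u ^ p * (2 * (v * volume B)) := by
      calc (∫⁻ x in B, (ENNReal.ofReal |f x| / lam) ^ p) * v
          = ∫⁻ x in B, (ENNReal.ofReal |f x| / lam) ^ p * v :=
            (lintegral_mul_const' v _ hvt).symm
        _ ≤ ∫⁻ x in B, K ^ p * u ^ p * (v + Φ (ENNReal.ofReal |f x| / lam)) :=
            lintegral_mono fun x => claimB _
        _ = K ^ p * u ^ p * ∫⁻ x in B, (v + Φ (ENNReal.ofReal |f x| / lam)) :=
            lintegral_const_mul' _ _ (ENNReal.mul_ne_top hKpt hupt)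
        _ = K ^ p * u ^ p * (v * volume B + ∫⁻ x in B, Φ (ENNReal.ofReal |f x| / lam)) := by
            rw [lintegral_add_left measurable_const, setLIntegral_const]
        _ ≤ K ^ p * u ^ p * (v * volume B + v * volume B) := by gcongr
        _ = K ^ p * u ^ p * (2 * (v * volume B)) := by ring
    -- divide by v
    have step2 : (∫⁻ x in B, (ENNReal.ofReal |f x| / lam) ^ p)
        ≤ 2 * (K ^ p * u ^ p) * volume B := by
      rw [← ENNReal.mul_le_mul_iff_left hv0 hvt]
      calc (∫⁻ x in B, (ENNReal.ofReal |f x| / lam) ^ p) * v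
          ≤ K ^ p * u ^ p * (2 * (v * volume B)) := step1
        _ = 2 * (K ^ p * u ^ p) * volume B * v := by ring
    -- relate to ∫ |f|^p
    have hgp : ∀ x : EuclideanSpace ℝ (Fin n), (ENNReal.ofReal |f x| / lam) ^ p
        = ENNReal.ofReal |f x| ^ p * (lam ^ p)⁻¹ := by
      intro x
      rw [ENNReal.div_rpow_of_nonneg _ _ hp0.le, div_eq_mul_inv]
    have step3 : (∫⁻ x in B, ENNReal.ofReal |f x| ^ p) * (lam ^ p)⁻¹
        ≤ 2 * (K ^ p * u ^ p) * volume B := by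
      rw [← lintegral_mul_const' _ _ (ENNReal.inv_ne_top.2 hlp0)]
      calc ∫⁻ x in B, ENNReal.ofReal |f x| ^ p * (lam ^ p)⁻¹
          = ∫⁻ x in B, (ENNReal.ofReal |f x| / lam) ^ p := by
            simp_rw [hgp]
        _ ≤ 2 * (K ^ p * u ^ p) * volume B := step2
    have step4 : (volume B)⁻¹ * ∫⁻ x in B, ENNReal.ofReal |f x| ^ p
        ≤ 2 * (K ^ p * u ^ p) * lam ^ p := by
      have h5 : (∫⁻ x in B, ENNReal.ofReal |f x| ^ p)
          ≤ 2 * (K ^ p * u ^ p) * volume B * lam ^ p := by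
        calc (∫⁻ x in B, ENNReal.ofReal |f x| ^ p)
            = (∫⁻ x in B, ENNReal.ofReal |f x| ^ p) * (lam ^ p)⁻¹ * lam ^ p := by
              rw [mul_assoc, ENNReal.inv_mul_cancel hlp0 hlpt, mul_one]
          _ ≤ 2 * (K ^ p * u ^ p) * volume B * lam ^ p := by gcongr
      calc (volume B)⁻¹ * ∫⁻ x in B, ENNReal.ofReal |f x| ^ p
          ≤ (volume B)⁻¹ * (2 * (K ^ p * u ^ p) * volume B * lam ^ p) := by gcongr
        _ = (volume B)⁻¹ * volume B * (2 * (K ^ p * u ^ p) * lam ^ p) := by ring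
        _ = 2 * (K ^ p * u ^ p) * lam ^ p := by
            rw [ENNReal.inv_mul_cancel hB0 hBt, one_mul]
    -- take p-th roots
    have hp_inv : (0:ℝ) ≤ 1 / p := by positivity
    have hroot : ∀ x : ℝ≥0∞, (x ^ p) ^ (1 / p) = x := by
      intro x
      rw [← ENNReal.rpow_mul, mul_one_div, div_self hp0.ne', ENNReal.rpow_one]
    calc L ≤ (2 * (K ^ p * u ^ p) * lam ^ p) ^ (1 / p) :=
          ENNReal.rpow_le_rpow step4 hp_inv
      _ = 2 ^ (1/p) * (K * u * lam) := by
          rw [ENNReal.mul_rpow_of_nonneg _ _ hp_inv, ENNReal.mul_rpow_of_nonneg _ _ hp_inv,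
            ENNReal.mul_rpow_of_nonneg _ _ hp_inv, hroot, hroot, hroot]
          ring
      _ ≤ 2 ^ (1:ℝ) * (K * u * lam) := by
          gcongr
          · exact one_le_two
          · rw [div_le_one hp0]; exact hp1.le
      _ = c * lam := by rw [hc_def, ENNReal.rpow_one]; ring
  -- conclude via the infimum
  have hfinal : L ≤ c * ballNorm Φ φ f a r := by
    rw [ballNorm]
    have hdiv : L / c ≤ sInf {lam : ℝ≥0∞ | 0 < lam ∧
        (ENNReal.ofReal (φ r))⁻¹ * ((volume (ball a r))⁻¹ *
          ∫⁻ x in ball a r, Φ (ENNReal.ofReal |f x| / lam)) ≤ 1} := by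
      apply le_sInf
      intro lam hlam
      rw [ENNReal.div_le_iff_le_mul (Or.inl hc0) (Or.inl hct), mul_comm]
      exact key lam hlam
    calc L = L / c * c := (ENNReal.div_mul_cancel hc0 hct).symm
      _ ≤ _ * c := by gcongr
      _ = c * _ := mul_comm _ _
  calc ((volume (ball a r))⁻¹ * ∫⁻ x in ball a r, ENNReal.ofReal |f x| ^ p) ^ (1 / p)
      = L := rfl
    _ ≤ c * ballNorm Φ φ f a r := hfinal
    _ = ENNReal.ofReal (2 * k) * ginv Φ (ENNReal.ofReal (φ r)) * ballNorm Φ φ f a r := by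
        rw [hc_def, hginv]
        congr 1
        rw [ENNReal.ofReal_mul (by norm_num : (0:ℝ) ≤ 2), ENNReal.ofReal_coe_nnreal,
          ENNReal.ofReal_ofNat]
end
end

section
/- Let Φ be a Young function satisfying the Δ₂-condition (Φ(2t) ≤ CΦ(t) for all t>0), and let φ : (0,∞)→(0,∞) be almost decreasing with φ(r)r^n almost increasing, satisfying ∫_r^∞ φ(t)/t dt ≤ Cφ(r) for all r > 0. Then there exists C' > 0 such that ∫_r^∞ Φ⁻¹(φ(t))/t dt ≤ C' Φ⁻¹(φ(r)) for all r > 0. -/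
open MeasureTheory Set Metric Filter NNReal ENNReal Topology

noncomputable section

variable {n : ℕ}

section GinvAux

variable {Φ : ℝ≥0∞ → ℝ≥0∞} {u : ℝ≥0∞}

lemma ginv_eq (hu : u ≠ ⊤) : ginv Φ u = sInf {t | u < Φ t} := if_neg hu

lemma ginv_mono : Monotone (ginv Φ) := by
  intro u v huv
  unfold ginv
  split_ifs with hu hv hv
  · exact le_rfl
  · exact absurd (top_le_iff.mp (hu ▸ huv)) hv
  · exact le_top
  · exact sInf_le_sInf fun t ht => lt_of_le_of_lt huv ht

lemma young_mul_le (hY : IsYoung Φ) {a : ℝ≥0} (ha : a ≤ 1) (t : ℝ≥0∞) :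
    Φ ((a : ℝ≥0∞) * t) ≤ (a : ℝ≥0∞) * Φ t := by
  have h := hY.conv t 0 a (1 - a) (add_tsub_cancel_of_le ha)
  simpa [hY.zero] using h

lemma le_young_mul (hY : IsYoung Φ) {a : ℝ≥0} (ha : 1 ≤ a) (t : ℝ≥0∞) :
    (a : ℝ≥0∞) * Φ t ≤ Φ ((a : ℝ≥0∞) * t) := by
  have ha0 : a ≠ 0 := by positivity
  have h := young_mul_le hY (a := a⁻¹) (inv_le_one_of_one_le₀ ha) ((a : ℝ≥0∞) * t)
  rw [ENNReal.coe_inv ha0, ← mul_assoc,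
    ENNReal.inv_mul_cancel (by exact_mod_cast ha0) ENNReal.coe_ne_top, one_mul] at h
  calc (a : ℝ≥0∞) * Φ t ≤ (a : ℝ≥0∞) * ((a : ℝ≥0∞)⁻¹ * Φ ((a:ℝ≥0∞) * t)) := by
        exact mul_le_mul_right h _
    _ = Φ ((a:ℝ≥0∞) * t) := by
        rw [← mul_assoc, ENNReal.mul_inv_cancel (by exact_mod_cast ha0) ENNReal.coe_ne_top,
          one_mul]

lemma phi_lt_top (hY : IsYoung Φ) {D : ℝ≥0∞} (hD : D ≠ ⊤)
    (hΔ : ∀ t, 0 < t → Φ (2 * t) ≤ D * Φ t) {t : ℝ≥0∞} (ht : t ≠ ⊤) : Φ t ≠ ⊤ := by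
  obtain ⟨t₀, ht₀, hft₀⟩ := hY.pos
  have ht₀top : t₀ ≠ ⊤ := fun h => hft₀ (h ▸ hY.top)
  have key : ∀ m : ℕ, Φ (2 ^ m * t₀) ≠ ⊤ := by
    intro m
    induction m with
    | zero => simpa using hft₀
    | succ m ih =>
      have h2 : (2:ℝ≥0∞) ^ (m+1) * t₀ = 2 * (2 ^ m * t₀) := by ring
      rw [h2]
      exact fun h => (ENNReal.mul_ne_top hD ih)
        (top_le_iff.mp (h ▸ hΔ _ (ENNReal.mul_pos (pow_ne_zero m two_ne_zero) (ne_of_gt ht₀))))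
  obtain ⟨n, hn⟩ := ENNReal.exists_nat_gt (ENNReal.div_lt_top ht (ne_of_gt ht₀)).ne
  have hn2 : (n : ℝ≥0∞) ≤ 2 ^ n := by
    calc (n : ℝ≥0∞) = ((n : ℕ) : ℝ≥0∞) := by norm_cast
    _ ≤ ((2 ^ n : ℕ) : ℝ≥0∞) := by exact_mod_cast (Nat.lt_two_pow_self (n := n)).le
    _ = 2 ^ n := by push_cast; ring
  have htle : t ≤ 2 ^ n * t₀ := by
    rw [← ENNReal.div_le_iff_le_mul (Or.inl (ne_of_gt ht₀)) (Or.inl ht₀top)]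
    exact (hn.le.trans hn2)
  exact fun h => key n (top_le_iff.mp (h ▸ hY.mono htle))

lemma ginv_ne_top (hY : IsYoung Φ) {u : ℝ≥0∞} (hu : u ≠ ⊤) : ginv Φ u ≠ ⊤ := by
  obtain ⟨t₁, ht₁top, ht₁0⟩ := hY.fin
  rw [ginv_eq hu]
  by_cases hΦ : Φ t₁ = ⊤
  · exact ne_top_of_le_ne_top ht₁top (sInf_le (by simp [hΦ, lt_top_iff_ne_top, hu]))
  · set a : ℝ≥0 := (u / Φ t₁).toNNReal + 1 with hadef
    have hau : ((u / Φ t₁).toNNReal : ℝ≥0∞) = u / Φ t₁ :=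
      ENNReal.coe_toNNReal (by
        exact (ENNReal.div_lt_top hu ht₁0).ne)
    have ha : 1 ≤ a := le_add_self
    have h1 : u < (a : ℝ≥0∞) * Φ t₁ := by
      rw [hadef]
      push_cast
      rw [hau, add_mul, one_mul, ENNReal.div_mul_cancel ht₁0 hΦ]
      exact ENNReal.lt_add_right hu ht₁0
    have h2 : u < Φ ((a : ℝ≥0∞) * t₁) := lt_of_lt_of_le h1 (le_young_mul hY ha t₁)
    exact ne_top_of_le_ne_top (ENNReal.mul_ne_top ENNReal.coe_ne_top ht₁top) (sInf_le h2)

lemma Phi_ginv_le (hY : IsYoung Φ) (hfin : ∀ t, t ≠ ⊤ → Φ t ≠ ⊤) {u : ℝ≥0∞} (hu : u ≠ ⊤) :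
    Φ (ginv Φ u) ≤ u := by
  have hs_top : ginv Φ u ≠ ⊤ := ginv_ne_top hY hu
  rcases eq_or_ne (ginv Φ u) 0 with h0 | h0
  · rw [h0, hY.zero]; exact zero_le
  · have hsinf : ∀ t, t < ginv Φ u → Φ t ≤ u := by
      intro t ht
      by_contra h
      push_neg at h
      have : ginv Φ u ≤ t := by rw [ginv_eq hu]; exact sInf_le h
      exact absurd ht (not_lt.mpr this)
    have hT : ginv Φ u < sInf {s | Φ s = ⊤} := by
      have hst : sInf {s | Φ s = ⊤} = ⊤ := by
        refine top_le_iff.mp (le_sInf fun x hx => ?_)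
        by_contra hx'
        exact hfin x (by simpa using hx') hx
      rw [hst]
      exact lt_top_iff_ne_top.mpr hs_top
    have hten := hY.lcont _ hT
    have hne : (𝓝[<] (ginv Φ u)).NeBot :=
      nhdsWithin_Iio_self_neBot' ⟨0, zero_lt_iff.mpr h0⟩
    exact le_of_tendsto hten (eventually_nhdsWithin_of_forall fun t ht => hsinf t ht)

lemma ginv_double (hY : IsYoung Φ) {D : ℝ≥0∞} (hD : D ≠ ⊤)
    (hΔ : ∀ t, 0 < t → Φ (2 * t) ≤ D * Φ t) {u : ℝ≥0∞} (hu : u ≠ ⊤) :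
    2 * ginv Φ u ≤ ginv Φ (D * u) := by
  have hfin : ∀ t, t ≠ ⊤ → Φ t ≠ ⊤ := fun t ht => phi_lt_top hY hD hΔ ht
  rcases eq_or_ne (ginv Φ u) 0 with h0 | h0
  · simp [h0]
  · have hs_top : ginv Φ u ≠ ⊤ := ginv_ne_top hY hu
    have hΦ2s : Φ (2 * ginv Φ u) ≤ D * u :=
      (hΔ _ (zero_lt_iff.mpr h0)).trans (mul_le_mul_right (Phi_ginv_le hY hfin hu) D)
    rw [ginv_eq (ENNReal.mul_ne_top hD hu)]
    refine le_sInf fun t ht => ?_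
    by_contra h
    push_neg at h
    exact absurd (hY.mono h.le) (not_le.mpr (lt_of_le_of_lt hΦ2s ht))

lemma ginv_pow_double (hY : IsYoung Φ) {D : ℝ≥0∞} (hD : D ≠ ⊤)
    (hΔ : ∀ t, 0 < t → Φ (2 * t) ≤ D * Φ t) (m : ℕ) {u : ℝ≥0∞} (hu : u ≠ ⊤) :
    2 ^ m * ginv Φ u ≤ ginv Φ (D ^ m * u) := by
  induction m with
  | zero => simp
  | succ m ih =>
    have h1 : (2:ℝ≥0∞) ^ (m+1) * ginv Φ u = 2 * (2 ^ m * ginv Φ u) := by ring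
    have h2 : D ^ (m+1) * u = D * (D ^ m * u) := by ring
    rw [h1, h2]
    calc 2 * (2 ^ m * ginv Φ u) ≤ 2 * ginv Φ (D ^ m * u) := mul_le_mul_right ih 2
      _ ≤ ginv Φ (D * (D ^ m * u)) :=
        ginv_double hY hD hΔ (ENNReal.mul_ne_top (ENNReal.pow_ne_top hD) hu)

lemma ginv_smul (hY : IsYoung Φ) {u : ℝ≥0∞} (hu : u ≠ ⊤) {a : ℝ≥0} (ha : 1 ≤ a) :
    ginv Φ ((a : ℝ≥0∞) * u) ≤ (a : ℝ≥0∞) * ginv Φ u := by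
  have ha0 : (a : ℝ≥0∞) ≠ 0 := by exact_mod_cast (by positivity : a ≠ 0)
  have hat : (a : ℝ≥0∞) ≠ ⊤ := ENNReal.coe_ne_top
  by_cases htop : (a : ℝ≥0∞) * ginv Φ u = ⊤
  · exact htop ▸ le_top
  refine le_of_forall_gt_imp_ge_of_dense fun c hc => ?_
  have h1 : ginv Φ u < c / (a : ℝ≥0∞) := by
    rw [ENNReal.lt_div_iff_mul_lt (Or.inl ha0) (Or.inl hat), mul_comm]
    exact hc
  rw [ginv_eq hu] at h1
  obtain ⟨t, htS, htlt⟩ := sInf_lt_iff.mp h1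
  have h2 : (a : ℝ≥0∞) * u < Φ ((a : ℝ≥0∞) * t) :=
    lt_of_lt_of_le (ENNReal.mul_lt_mul_right ha0 hat htS) (le_young_mul hY ha t)
  have h3 : ginv Φ ((a : ℝ≥0∞) * u) ≤ (a : ℝ≥0∞) * t := by
    rw [ginv_eq (ENNReal.mul_ne_top hat hu)]
    exact sInf_le h2
  refine h3.trans ?_
  rw [mul_comm]
  exact (ENNReal.le_div_iff_mul_le (Or.inl ha0) (Or.inl hat)).mp htlt.le

end GinvAux

set_option maxHeartbeats 1000000 in
/-- if `Φ ∈ Δ₂` and `φ ∈ 𝒢^dec` satisfies `∫_r^∞ φ(t)/t dt ≤ C φ(r)`,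
then `∫_r^∞ Φ⁻¹(φ(t))/t dt ≤ C' Φ⁻¹(φ(r))` for all `r > 0`. -/
theorem stmt8 {n : ℕ} (Φ : ℝ≥0∞ → ℝ≥0∞) (hY : IsYoung Φ)
    (hΔ : ∃ C : ℝ, 0 < C ∧ ∀ t : ℝ≥0∞, 0 < t → Φ (2 * t) ≤ ENNReal.ofReal C * Φ t)
    (φ : ℝ → ℝ) (hφpos : ∀ r : ℝ, 0 < r → 0 < φ r) (hφdec : AlmostDecreasingOn φ)
    (hφinc : AlmostIncreasingOn (fun r => φ r * r ^ n))
    (C : ℝ) (hC : 0 < C)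
    (hint : ∀ r : ℝ, 0 < r →
      ∫⁻ t in Set.Ioi r, ENNReal.ofReal (φ t / t) ≤ ENNReal.ofReal (C * φ r)) :
    ∃ C' : ℝ, 0 < C' ∧ ∀ r : ℝ, 0 < r →
      ∫⁻ t in Set.Ioi r, ginv Φ (ENNReal.ofReal (φ t)) / ENNReal.ofReal t ≤
        ENNReal.ofReal C' * ginv Φ (ENNReal.ofReal (φ r)) := by
  obtain ⟨Cd, hCd, hCdle⟩ := hφdec
  obtain ⟨K, hK, hΔK⟩ := hΔ
  set Kr : ℝ := K + 2 with hKrdef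
  have hKr2 : (2:ℝ) ≤ Kr := by simp [hKrdef]; linarith
  have hKrpos : (0:ℝ) < Kr := by linarith
  set D : ℝ≥0∞ := ENNReal.ofReal Kr with hDdef
  have hDtop : D ≠ ⊤ := ENNReal.ofReal_ne_top
  have hΔD : ∀ t, 0 < t → Φ (2 * t) ≤ D * Φ t := fun t ht =>
    (hΔK t ht).trans (mul_le_mul_left (ENNReal.ofReal_le_ofReal (by linarith)) _)
  -- θ and A
  set θ : ℝ := (2 * Cd * C) / (2 * Cd * C + 1) with hθdef
  have hccpos : (0:ℝ) < 2 * Cd * C := by positivity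
  have hθpos : 0 < θ := by positivity
  have hθlt : θ < 1 := by rw [hθdef, div_lt_one (by positivity)]; linarith
  set A : ℝ := 2 * Cd * C / θ + 1 with hAdef
  have hA1 : 1 ≤ A := by
    rw [hAdef]
    have : (0:ℝ) ≤ 2 * Cd * C / θ := by positivity
    linarith
  -- decay of φ along dyadic scales
  have decay : ∀ r : ℝ, 0 < r → ∀ k : ℕ, φ (2 ^ k * r) ≤ A * θ ^ k * φ r := by
    intro r hr
    set Gf : ℝ → ℝ≥0∞ := fun x => ∫⁻ t in Set.Ioi x, ENNReal.ofReal (φ t / t) with hGfdef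
    have hGfle : ∀ x, 0 < x → Gf x ≤ ENNReal.ofReal (C * φ x) := hint
    have hGffin : ∀ x, 0 < x → Gf x ≠ ⊤ :=
      fun x hx => ne_top_of_le_ne_top ENNReal.ofReal_ne_top (hGfle x hx)
    have hblock : ∀ x, 0 < x →
        ENNReal.ofReal (φ (2 * x) / (2 * Cd)) + Gf (2 * x) ≤ Gf x := by
      intro x hx
      have hsplit : Gf x = (∫⁻ t in Set.Ioc x (2 * x), ENNReal.ofReal (φ t / t)) + Gf (2 * x) := by
        rw [hGfdef]
        simp only []
        rw [← lintegral_union measurableSet_Ioi (Set.Ioc_disjoint_Ioi le_rfl),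
          Set.Ioc_union_Ioi_eq_Ioi (by linarith)]
      have hlow : ENNReal.ofReal (φ (2 * x) / (2 * Cd)) ≤
          ∫⁻ t in Set.Ioc x (2 * x), ENNReal.ofReal (φ t / t) := by
        have key : ∀ t ∈ Set.Ioo x (2 * x),
            ENNReal.ofReal (φ (2 * x) / (Cd * (2 * x))) ≤ ENNReal.ofReal (φ t / t) := by
          intro t ht
          apply ENNReal.ofReal_le_ofReal
          have h1 : φ (2 * x) ≤ Cd * φ t := hCdle t (2 * x) (by linarith [ht.1]) ht.2
          have hphit : 0 < φ t := hφpos t (by linarith [ht.1])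
          have htpos : 0 < t := lt_trans hx ht.1
          rw [div_le_div_iff₀ (by positivity) htpos]
          calc φ (2 * x) * t ≤ Cd * φ t * t := mul_le_mul_of_nonneg_right h1 htpos.le
            _ ≤ Cd * φ t * (2 * x) := mul_le_mul_of_nonneg_left ht.2.le (by positivity)
            _ = φ t * (Cd * (2 * x)) := by ring
        calc ENNReal.ofReal (φ (2 * x) / (2 * Cd))
            = ENNReal.ofReal (φ (2 * x) / (Cd * (2 * x))) * volume (Set.Ioo x (2 * x)) := by
              rw [Real.volume_Ioo, ← ENNReal.ofReal_mul (div_nonneg (hφpos _ (by linarith)).le (by positivity))]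
              congr 1
              field_simp
              ring
          _ = ∫⁻ _ in Set.Ioo x (2 * x), ENNReal.ofReal (φ (2 * x) / (Cd * (2 * x))) :=
              (setLIntegral_const _ _).symm
          _ ≤ ∫⁻ t in Set.Ioo x (2 * x), ENNReal.ofReal (φ t / t) :=
              setLIntegral_mono' measurableSet_Ioo key
          _ ≤ _ := lintegral_mono_set Set.Ioo_subset_Ioc_self
      rw [hsplit]
      exact add_le_add_left hlow _
    set G : ℕ → ℝ := fun k => (Gf (2 ^ k * r)).toReal with hGdef
    have hpow : ∀ k : ℕ, (0:ℝ) < 2 ^ k * r := fun k => by positivity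
    have hGnn : ∀ k, 0 ≤ G k := fun k => ENNReal.toReal_nonneg
    have hb : ∀ k : ℕ, φ (2 ^ (k + 1) * r) / (2 * Cd) + G (k + 1) ≤ G k := by
      intro k
      have h := hblock (2 ^ k * r) (hpow k)
      have h2 : 2 * (2 ^ k * r) = 2 ^ (k + 1) * r := by ring
      rw [h2] at h
      have h3 := ENNReal.toReal_mono (hGffin _ (hpow k)) h
      rwa [ENNReal.toReal_add ENNReal.ofReal_ne_top (hGffin _ (hpow (k + 1))),
        ENNReal.toReal_ofReal (div_nonneg (hφpos _ (hpow (k + 1))).le (by positivity))] at h3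
    have hc : ∀ k : ℕ, G k ≤ C * φ (2 ^ k * r) := by
      intro k
      have h3 := ENNReal.toReal_mono ENNReal.ofReal_ne_top (hGfle _ (hpow k))
      rwa [ENNReal.toReal_ofReal (mul_nonneg hC.le (hφpos _ (hpow k)).le)] at h3
    have hφposk : ∀ k : ℕ, 0 < φ (2 ^ k * r) := fun k => hφpos _ (hpow k)
    have hrec : ∀ k, G (k + 1) ≤ θ * G k := by
      intro k
      have h1 := hb k
      have h2 := hc (k + 1)
      rw [hθdef, div_mul_eq_mul_div, le_div_iff₀ (by positivity)]
      have hq : 2 * Cd * C * (φ (2 ^ (k + 1) * r) / (2 * Cd)) = C * φ (2 ^ (k + 1) * r) := by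
        field_simp
      nlinarith [hGnn (k + 1), mul_le_mul_of_nonneg_left h1 hccpos.le, hq]
    have hGk : ∀ k, G k ≤ θ ^ k * G 0 := by
      intro k
      induction k with
      | zero => simp
      | succ k ih =>
        calc G (k + 1) ≤ θ * G k := hrec k
          _ ≤ θ * (θ ^ k * G 0) := by nlinarith
          _ = θ ^ (k + 1) * G 0 := by ring
    have hG0 : G 0 ≤ C * φ r := by
      have := hc 0
      rwa [pow_zero, one_mul] at this
    intro k
    cases k with
    | zero =>
      rw [pow_zero, pow_zero, one_mul, mul_one]
      nlinarith [hφpos r hr]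
    | succ j =>
      have h1 : φ (2 ^ (j + 1) * r) ≤ 2 * Cd * G j := by
        have h0 := hb j
        have hq : 2 * Cd * (φ (2 ^ (j + 1) * r) / (2 * Cd)) = φ (2 ^ (j + 1) * r) := by
          field_simp
        nlinarith [hGnn (j + 1), mul_le_mul_of_nonneg_left h0 (by positivity : (0:ℝ) ≤ 2 * Cd), hq]
      have hθjnn : (0:ℝ) ≤ θ ^ j := by positivity
      calc φ (2 ^ (j + 1) * r) ≤ 2 * Cd * G j := h1
        _ ≤ 2 * Cd * (θ ^ j * G 0) := mul_le_mul_of_nonneg_left (hGk j) (by positivity)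
        _ ≤ 2 * Cd * (θ ^ j * (C * φ r)) :=
            mul_le_mul_of_nonneg_left (mul_le_mul_of_nonneg_left hG0 hθjnn) (by positivity)
        _ = 2 * Cd * C / θ * θ ^ (j + 1) * φ r := by field_simp; ring
        _ ≤ A * θ ^ (j + 1) * φ r := by
          have hθj1 : (0:ℝ) ≤ θ ^ (j + 1) * φ r :=
            mul_nonneg (pow_nonneg hθpos.le _) (hφpos r hr).le
          nlinarith [hθj1]
  -- choice of N
  obtain ⟨N, hN⟩ := exists_pow_lt_of_lt_one (show (0:ℝ) < 1 / Kr by positivity) hθlt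
  have hN0 : N ≠ 0 := by
    intro h
    rw [h, pow_zero] at hN
    have : Kr < 1 := by
      rw [lt_div_iff₀ hKrpos] at hN
      nlinarith
    linarith
  haveI : NeZero N := ⟨hN0⟩
  have hKθN : Kr * θ ^ N ≤ 1 := by
    rw [lt_div_iff₀ hKrpos] at hN
    nlinarith
  -- the constant E
  set B : ℝ := Cd * A with hBdef
  set E : ℝ≥0 := (max 1 B).toNNReal with hEdef
  have hE1 : 1 ≤ E := by
    rw [hEdef, ← Real.toNNReal_one]
    exact Real.toNNReal_mono (le_max_left 1 B)
  have hEB : B ≤ (E : ℝ) := by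
    rw [hEdef, Real.coe_toNNReal _ (le_trans zero_le_one (le_max_left 1 B))]
    exact le_max_right 1 B
  refine ⟨2 * N * (E : ℝ) + 1, by positivity, fun r hr => ?_⟩
  set u0 : ℝ≥0∞ := ginv Φ (ENNReal.ofReal (φ r)) with hu0def
  -- covering of Ioi r by dyadic blocks
  have hcover : Set.Ioi r ⊆ ⋃ k : ℕ, Set.Ioc (2 ^ k * r) (2 ^ (k + 1) * r) := by
    intro t ht
    simp only [Set.mem_Ioi] at ht
    have hex : ∃ m : ℕ, t ≤ 2 ^ m * r := by
      obtain ⟨m, hm⟩ := pow_unbounded_of_one_lt (t / r) (by norm_num : (1:ℝ) < 2)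
      refine ⟨m, ?_⟩
      rw [div_lt_iff₀ hr] at hm
      linarith
    classical
    have hm1 : Nat.find hex ≠ 0 := by
      intro h
      have h2 := Nat.find_spec hex
      rw [h, pow_zero, one_mul] at h2
      linarith
    obtain ⟨j, hj⟩ := Nat.exists_eq_succ_of_ne_zero hm1
    refine Set.mem_iUnion.mpr ⟨j, ?_, ?_⟩
    · by_contra h
      push_neg at h
      exact Nat.find_min hex (by omega) h
    · have h2 := Nat.find_spec hex
      rwa [hj] at h2
  -- per-block bound
  have termbound : ∀ k : ℕ,
      (∫⁻ t in Set.Ioc (2 ^ k * r) (2 ^ (k + 1) * r),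
        ginv Φ (ENNReal.ofReal (φ t)) / ENNReal.ofReal t) ≤
      ((2 : ℝ≥0∞) ^ (k / N))⁻¹ * ((E : ℝ≥0∞) * u0) := by
    intro k
    have hak : (0:ℝ) < 2 ^ k * r := by positivity
    have hofa0 : ENNReal.ofReal (2 ^ k * r) ≠ 0 := ne_of_gt (ENNReal.ofReal_pos.mpr hak)
    have step1 : (∫⁻ t in Set.Ioc (2 ^ k * r) (2 ^ (k + 1) * r),
        ginv Φ (ENNReal.ofReal (φ t)) / ENNReal.ofReal t) ≤
        ginv Φ (ENNReal.ofReal (Cd * φ (2 ^ k * r))) := by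
      have ptwise : ∀ t ∈ Set.Ioc (2 ^ k * r) (2 ^ (k + 1) * r),
          ginv Φ (ENNReal.ofReal (φ t)) / ENNReal.ofReal t ≤
          ginv Φ (ENNReal.ofReal (Cd * φ (2 ^ k * r))) / ENNReal.ofReal (2 ^ k * r) := by
        intro t ht
        exact ENNReal.div_le_div
          (ginv_mono (ENNReal.ofReal_le_ofReal (hCdle _ t hak ht.1)))
          (ENNReal.ofReal_le_ofReal ht.1.le)
      calc (∫⁻ t in Set.Ioc (2 ^ k * r) (2 ^ (k + 1) * r),
              ginv Φ (ENNReal.ofReal (φ t)) / ENNReal.ofReal t)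
          ≤ ∫⁻ _ in Set.Ioc (2 ^ k * r) (2 ^ (k + 1) * r),
              ginv Φ (ENNReal.ofReal (Cd * φ (2 ^ k * r))) / ENNReal.ofReal (2 ^ k * r) :=
            setLIntegral_mono' measurableSet_Ioc ptwise
        _ = ginv Φ (ENNReal.ofReal (Cd * φ (2 ^ k * r))) / ENNReal.ofReal (2 ^ k * r) *
              volume (Set.Ioc (2 ^ k * r) (2 ^ (k + 1) * r)) := setLIntegral_const _ _
        _ = ginv Φ (ENNReal.ofReal (Cd * φ (2 ^ k * r))) := by
            rw [Real.volume_Ioc, show (2:ℝ) ^ (k + 1) * r - 2 ^ k * r = 2 ^ k * r by ring,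
              ENNReal.div_mul_cancel hofa0 ENNReal.ofReal_ne_top]
    have c1 : ginv Φ (ENNReal.ofReal (Cd * φ (2 ^ k * r))) ≤
        ginv Φ (ENNReal.ofReal (B * θ ^ k * φ r)) := by
      apply ginv_mono
      apply ENNReal.ofReal_le_ofReal
      have := decay r hr k
      rw [hBdef]
      nlinarith
    have c2 : ginv Φ (ENNReal.ofReal (B * θ ^ k * φ r)) ≤
        ((2 : ℝ≥0∞) ^ (k / N))⁻¹ *
          ginv Φ (D ^ (k / N) * ENNReal.ofReal (B * θ ^ k * φ r)) := by
      have h := ginv_pow_double hY hDtop hΔD (k / N)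
        (u := ENNReal.ofReal (B * θ ^ k * φ r)) ENNReal.ofReal_ne_top
      calc ginv Φ (ENNReal.ofReal (B * θ ^ k * φ r))
          = ((2 : ℝ≥0∞) ^ (k / N))⁻¹ *
            (2 ^ (k / N) * ginv Φ (ENNReal.ofReal (B * θ ^ k * φ r))) := by
            rw [← mul_assoc, ENNReal.inv_mul_cancel (by positivity)
              (by exact ENNReal.pow_ne_top ENNReal.ofNat_ne_top), one_mul]
        _ ≤ _ := mul_le_mul_right h _
    have c3 : ginv Φ (D ^ (k / N) * ENNReal.ofReal (B * θ ^ k * φ r)) ≤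
        ginv Φ ((E : ℝ≥0∞) * ENNReal.ofReal (φ r)) := by
      apply ginv_mono
      have heq : D ^ (k / N) * ENNReal.ofReal (B * θ ^ k * φ r) =
          ENNReal.ofReal (Kr ^ (k / N) * (B * θ ^ k * φ r)) := by
        rw [hDdef, ← ENNReal.ofReal_pow (by linarith), ← ENNReal.ofReal_mul (by positivity)]
      have hcoe : (E : ℝ≥0∞) * ENNReal.ofReal (φ r) = ENNReal.ofReal ((E : ℝ) * φ r) := by
        rw [ENNReal.ofReal_mul (by positivity), ENNReal.ofReal_coe_nnreal]
      rw [heq, hcoe]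
      apply ENNReal.ofReal_le_ofReal
      have hKθ : Kr ^ (k / N) * θ ^ k ≤ 1 := by
        have hsplitk : θ ^ k = (θ ^ N) ^ (k / N) * θ ^ (k % N) := by
          conv_lhs => rw [← Nat.div_add_mod k N]
          rw [pow_add, pow_mul]
        calc Kr ^ (k / N) * θ ^ k = (Kr * θ ^ N) ^ (k / N) * θ ^ (k % N) := by
              rw [hsplitk, mul_pow]; ring
          _ ≤ 1 * 1 := by
              apply mul_le_mul
              · exact pow_le_one₀ (by positivity) hKθN
              · exact pow_le_one₀ hθpos.le hθlt.le
              · positivity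
              · norm_num
          _ = 1 := by norm_num
      have hφr := hφpos r hr
      have hBpos : 0 < B := by rw [hBdef]; positivity
      calc Kr ^ (k / N) * (B * θ ^ k * φ r) = Kr ^ (k / N) * θ ^ k * (B * φ r) := by ring
        _ ≤ 1 * (B * φ r) := mul_le_mul_of_nonneg_right hKθ (mul_pos hBpos hφr).le
        _ = B * φ r := one_mul _
        _ ≤ (E : ℝ) * φ r := mul_le_mul_of_nonneg_right hEB hφr.le
    have c4 : ginv Φ ((E : ℝ≥0∞) * ENNReal.ofReal (φ r)) ≤ (E : ℝ≥0∞) * u0 :=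
      ginv_smul hY ENNReal.ofReal_ne_top hE1
    exact step1.trans (c1.trans (c2.trans
      (mul_le_mul_right (c3.trans c4) _)))
  -- geometric sum
  have sumbound : (∑' k : ℕ, ((2 : ℝ≥0∞) ^ (k / N))⁻¹) = 2 * N := by
    have h1 : (∑' k : ℕ, ((2 : ℝ≥0∞) ^ (k / N))⁻¹) =
        ∑' p : ℕ × Fin N, ((2 : ℝ≥0∞) ^ p.1)⁻¹ := by
      rw [← (Nat.divModEquiv N).tsum_eq (fun p : ℕ × Fin N => ((2 : ℝ≥0∞) ^ p.1)⁻¹)]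
      simp [Nat.divModEquiv]
    rw [h1, ENNReal.tsum_prod']
    have h2 : ∀ a : ℕ, (∑' _ : Fin N, ((2 : ℝ≥0∞) ^ a)⁻¹) = (N : ℝ≥0∞) * ((2:ℝ≥0∞) ^ a)⁻¹ := by
      intro a
      rw [tsum_fintype]
      simp [Finset.sum_const, nsmul_eq_mul]
    simp_rw [h2]
    rw [ENNReal.tsum_mul_left]
    have h3 : (∑' a : ℕ, ((2 : ℝ≥0∞) ^ a)⁻¹) = 2 := by
      have hip : ∀ a : ℕ, ((2 : ℝ≥0∞) ^ a)⁻¹ = (2⁻¹ : ℝ≥0∞) ^ a := fun a => by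
        rw [ENNReal.inv_pow]
      rw [tsum_congr hip, ENNReal.tsum_geometric, ENNReal.one_sub_inv_two, inv_inv]
    rw [h3]
    ring
  -- put everything together
  calc (∫⁻ t in Set.Ioi r, ginv Φ (ENNReal.ofReal (φ t)) / ENNReal.ofReal t)
      ≤ ∫⁻ t in ⋃ k : ℕ, Set.Ioc (2 ^ k * r) (2 ^ (k + 1) * r),
          ginv Φ (ENNReal.ofReal (φ t)) / ENNReal.ofReal t := lintegral_mono_set hcover
    _ ≤ ∑' k : ℕ, ∫⁻ t in Set.Ioc (2 ^ k * r) (2 ^ (k + 1) * r),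
          ginv Φ (ENNReal.ofReal (φ t)) / ENNReal.ofReal t := lintegral_iUnion_le _ _
    _ ≤ ∑' k : ℕ, ((2 : ℝ≥0∞) ^ (k / N))⁻¹ * ((E : ℝ≥0∞) * u0) :=
        ENNReal.tsum_le_tsum termbound
    _ = (∑' k : ℕ, ((2 : ℝ≥0∞) ^ (k / N))⁻¹) * ((E : ℝ≥0∞) * u0) := ENNReal.tsum_mul_right
    _ = 2 * (N : ℝ≥0∞) * (E : ℝ≥0∞) * u0 := by rw [sumbound]; ring
    _ ≤ ENNReal.ofReal (2 * N * (E : ℝ) + 1) * u0 := by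
        apply mul_le_mul_left
        have : (2 : ℝ≥0∞) * (N : ℝ≥0∞) * (E : ℝ≥0∞) = ENNReal.ofReal (2 * N * (E : ℝ)) := by
          rw [ENNReal.ofReal_mul (by positivity), ENNReal.ofReal_mul (by norm_num),
            ENNReal.ofReal_ofNat, ENNReal.ofReal_natCast, ENNReal.ofReal_coe_nnreal]
        rw [this]
        exact ENNReal.ofReal_le_ofReal (by linarith)
end
end

section
/- Let Φ, Ψ be Young functions, φ ∈ 𝒢^dec, and ρ : (0,∞)→(0,∞). Assume lim_{r→∞} φ(r) = 0 or that Ψ⁻¹(t)/Φ⁻¹(t) is almost decreasing. If there is A > 0 with (sup_{0<t≤r} ρ(t)) · Φ⁻¹(φ(r)) ≤ A Ψ⁻¹(φ(r)) for all r > 0, then for every C₀ > 0 there exists C₁ > 0 such that for all f ∈ L^{(Φ,φ)}(ℝⁿ) with f ≢ 0 and all x ∈ ℝⁿ: Ψ(M_ρ f(x)/(C₁‖f‖_{L^{(Φ,φ)}})) ≤ Φ(Mf(x)/(C₀‖f‖_{L^{(Φ,φ)}})), where M_ρ f(x) = sup_{B(a,r)∋x} ρ(r)·(1/|B(a,r)|)∫_{B(a,r)}|f|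 and M is the Hardy–Littlewood maximal operator. -/
open MeasureTheory Set Metric Filter NNReal ENNReal Topology

noncomputable section

variable {n : ℕ}

/-- The generalized fractional maximal operator
`M_ρ f(x) = sup_{B(a,r) ∋ x} ρ(r) ⨍_{B(a,r)} |f|`. -/
def Mrho {n : ℕ} (ρ : ℝ → ℝ) (f : EuclideanSpace ℝ (Fin n) → ℝ)
    (x : EuclideanSpace ℝ (Fin n)) : ℝ≥0∞ :=
  ⨆ (a : EuclideanSpace ℝ (Fin n)) (r : ℝ) (_ : 0 < r) (_ : x ∈ ball a r),
    ENNReal.ofReal (ρ r) *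
      ((volume (ball a r))⁻¹ * ∫⁻ y in ball a r, ENNReal.ofReal |f y|)

/-! ### Auxiliary lemmas about `ginv` and Young functions -/

lemma ginv_top (Φ : ℝ≥0∞ → ℝ≥0∞) : ginv Φ ⊤ = ⊤ := if_pos rfl

lemma le_ginv {Φ : ℝ≥0∞ → ℝ≥0∞} (hm : Monotone Φ) {u v : ℝ≥0∞} (h : Φ u ≤ v) :
    u ≤ ginv Φ v := by
  by_cases hv : v = ⊤
  · rw [hv, ginv_top]; exact le_top
  · rw [ginv, if_neg hv]
    refine le_sInf fun t ht => ?_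
    by_contra hc
    push_neg at hc
    exact absurd ((hm hc.le).trans h) ht.not_ge

lemma ginv_le {Φ : ℝ≥0∞ → ℝ≥0∞} {v t : ℝ≥0∞} (hv : v ≠ ⊤) (h : v < Φ t) :
    ginv Φ v ≤ t := by
  rw [ginv, if_neg hv]; exact sInf_le h

lemma le_of_lt_ginv {Φ : ℝ≥0∞ → ℝ≥0∞} {u v : ℝ≥0∞} (hv : v ≠ ⊤) (h : u < ginv Φ v) :
    Φ u ≤ v := by
  rw [ginv, if_neg hv] at h
  by_contra hc
  push_neg at hc
  exact absurd (sInf_le (show u ∈ {t | v < Φ t} from hc)) h.not_ge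

lemma ginv_mono_s17 (Φ : ℝ≥0∞ → ℝ≥0∞) {u v : ℝ≥0∞} (h : u ≤ v) : ginv Φ u ≤ ginv Φ v := by
  by_cases hv : v = ⊤
  · rw [hv, ginv_top]; exact le_top
  · have hu : u ≠ ⊤ := (h.trans_lt (lt_top_iff_ne_top.2 hv)).ne
    rw [ginv, if_neg hu, ginv, if_neg hv]
    exact sInf_le_sInf fun t ht => h.trans_lt ht

lemma young_smul {Φ : ℝ≥0∞ → ℝ≥0∞} (hΦ : IsYoung Φ) (a : ℝ≥0) (ha : a ≤ 1) (x : ℝ≥0∞) :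
    Φ ((a : ℝ≥0∞) * x) ≤ (a : ℝ≥0∞) * Φ x := by
  have h := hΦ.conv x 0 a (1 - a) (add_tsub_cancel_of_le ha)
  simpa [hΦ.zero] using h

lemma young_slope {Φ : ℝ≥0∞ → ℝ≥0∞} (hΦ : IsYoung Φ) {t₁ t₂ : ℝ≥0∞}
    (h12 : t₁ ≤ t₂) (h20 : t₂ ≠ 0) (h2t : t₂ ≠ ⊤) : Φ t₁ ≤ t₁ / t₂ * Φ t₂ := by
  have h1t : t₁ ≠ ⊤ := (h12.trans_lt h2t.lt_top).ne
  have hd : ((t₁ / t₂).toNNReal : ℝ≥0∞) = t₁ / t₂ :=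
    ENNReal.coe_toNNReal (ENNReal.div_lt_top h1t h20).ne
  have hd1 : (t₁ / t₂).toNNReal ≤ 1 := by
    have h1 : (((t₁ / t₂).toNNReal : ℝ≥0∞)) ≤ 1 := by
      rw [hd]; exact ENNReal.div_le_of_le_mul (by simpa using h12)
    exact_mod_cast h1
  have hmul : ((t₁ / t₂).toNNReal : ℝ≥0∞) * t₂ = t₁ := by
    rw [hd, ENNReal.div_mul_cancel h20 h2t]
  calc Φ t₁ = Φ (((t₁ / t₂).toNNReal : ℝ≥0∞) * t₂) := by rw [hmul]
  _ ≤ ((t₁ / t₂).toNNReal : ℝ≥0∞) * Φ t₂ := young_smul hΦ _ hd1 t₂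
  _ = t₁ / t₂ * Φ t₂ := by rw [hd]

lemma slope_cross {Φ : ℝ≥0∞ → ℝ≥0∞} (hΦ : IsYoung Φ) {c g : ℝ≥0∞}
    (hc0 : c ≠ 0) (hct : c ≠ ⊤) (hcg : c ≤ g) : g * Φ c ≤ c * Φ g := by
  by_cases hg : g = ⊤
  · rw [hg, hΦ.top, ENNReal.mul_top hc0]; exact le_top
  · have hg0 : g ≠ 0 := fun h => hc0 (le_antisymm (h ▸ hcg) (zero_le (a := c)))
    have hs := young_slope hΦ hcg hg0 hg
    calc g * Φ c ≤ g * (c / g * Φ g) := mul_le_mul_right hs g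
    _ = c / g * g * Φ g := by ring
    _ = c * Φ g := by rw [ENNReal.div_mul_cancel hg0 hg]

lemma ginv_pos_s17 {Φ : ℝ≥0∞ → ℝ≥0∞} (hΦ : IsYoung Φ) {v : ℝ≥0∞} (hv0 : v ≠ 0) :
    0 < ginv Φ v := by
  obtain ⟨t₂, ht₂0, ht₂t⟩ := hΦ.pos
  by_cases hΦ2 : Φ t₂ = 0
  · exact lt_of_lt_of_le ht₂0 (le_ginv hΦ.mono (by rw [hΦ2]; exact zero_le (a := v)))
  by_cases hvt : v = ⊤
  · rw [hvt, ginv_top]; exact zero_lt_top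
  · set d : ℝ≥0∞ := (v / Φ t₂) ⊓ 1 with hddef
    have hd0 : d ≠ 0 := (lt_min (ENNReal.div_pos hv0 ht₂t) one_pos).ne'
    have hd1 : d ≤ 1 := min_le_right _ _
    have hdt : d ≠ ⊤ := (hd1.trans_lt ENNReal.one_lt_top).ne
    have hda : ((d.toNNReal : ℝ≥0) : ℝ≥0∞) = d := ENNReal.coe_toNNReal hdt
    have ha1 : d.toNNReal ≤ 1 := by
      have : ((d.toNNReal : ℝ≥0) : ℝ≥0∞) ≤ 1 := by rw [hda]; exact hd1
      exact_mod_cast this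
    have hΦd : Φ (((d.toNNReal : ℝ≥0) : ℝ≥0∞) * t₂) ≤ v := by
      calc Φ (((d.toNNReal : ℝ≥0) : ℝ≥0∞) * t₂) ≤ ((d.toNNReal : ℝ≥0) : ℝ≥0∞) * Φ t₂ :=
        young_smul hΦ _ ha1 t₂
      _ = d * Φ t₂ := by rw [hda]
      _ ≤ (v / Φ t₂) * Φ t₂ := mul_le_mul_left (min_le_left _ _) _
      _ = v := ENNReal.div_mul_cancel hΦ2 ht₂t
    refine lt_of_lt_of_le ?_ (le_ginv hΦ.mono hΦd)
    exact ENNReal.mul_pos (by rw [hda]; exact hd0) ht₂0.ne'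

lemma ginv_lt_top_s17 {Φ : ℝ≥0∞ → ℝ≥0∞} (hΦ : IsYoung Φ) {v : ℝ≥0∞} (hv : v ≠ ⊤) :
    ginv Φ v < ⊤ := by
  obtain ⟨t₁, ht₁t, hΦ1⟩ := hΦ.fin
  by_cases hΦtop : Φ t₁ = ⊤
  · exact (ginv_le hv (hΦtop ▸ hv.lt_top)).trans_lt ht₁t.lt_top
  · have ht₁0 : t₁ ≠ 0 := fun h => hΦ1 (h ▸ hΦ.zero)
    obtain ⟨m, hm⟩ := ENNReal.exists_nat_gt (ENNReal.div_lt_top hv hΦ1).ne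
    have hm0 : (m : ℝ≥0∞) ≠ 0 := by
      intro h
      rw [h] at hm
      exact (not_lt.2 (zero_le)) hm
    have hmt : (m : ℝ≥0∞) ≠ ⊤ := ENNReal.natCast_ne_top m
    have hvm : v < (m : ℝ≥0∞) * Φ t₁ :=
      (ENNReal.div_lt_iff (Or.inl hΦ1) (Or.inl hΦtop)).mp hm
    have hslope : (m : ℝ≥0∞) * Φ t₁ ≤ Φ ((m : ℝ≥0∞) * t₁) := by
      have hmt₁0 : (m : ℝ≥0∞) * t₁ ≠ 0 := mul_ne_zero hm0 ht₁0
      have hmt₁t : (m : ℝ≥0∞) * t₁ ≠ ⊤ := ENNReal.mul_ne_top hmt ht₁t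
      have h1 : t₁ ≤ (m : ℝ≥0∞) * t₁ := by
        refine le_mul_of_one_le_left (zero_le) ?_
        have : (1 : ℕ) ≤ m := Nat.one_le_iff_ne_zero.2 (by exact_mod_cast hm0)
        exact_mod_cast this
      have hs := young_slope hΦ h1 hmt₁0 hmt₁t
      have hq : t₁ / ((m : ℝ≥0∞) * t₁) = 1 / (m : ℝ≥0∞) := by
        rw [← ENNReal.mul_div_mul_right 1 (m : ℝ≥0∞) ht₁0 ht₁t, one_mul]
      rw [hq] at hs
      calc (m : ℝ≥0∞) * Φ t₁ ≤ (m : ℝ≥0∞) * (1 / (m : ℝ≥0∞) * Φ ((m : ℝ≥0∞) * t₁)) :=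
        mul_le_mul_right hs _
      _ = ((m : ℝ≥0∞) * (1 / (m : ℝ≥0∞))) * Φ ((m : ℝ≥0∞) * t₁) := by ring
      _ = Φ ((m : ℝ≥0∞) * t₁) := by
          rw [one_div, ENNReal.mul_inv_cancel hm0 hmt, one_mul]
    exact (ginv_le hv (hvm.trans_le hslope)).trans_lt (ENNReal.mul_ne_top hmt ht₁t).lt_top

lemma le_mul_sInf {S : Set ℝ≥0∞} {x k : ℝ≥0∞} (hk0 : k ≠ 0) (hkt : k ≠ ⊤)
    (h : ∀ t ∈ S, x ≤ k * t) : x ≤ k * sInf S := by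
  have h1 : x / k ≤ sInf S := by
    refine le_sInf fun t ht => ?_
    exact (ENNReal.div_le_iff hk0 hkt).mpr ((h t ht).trans_eq (mul_comm k t))
  calc x = k * (x / k) := (ENNReal.mul_div_cancel hk0 hkt).symm
  _ ≤ k * sInf S := mul_le_mul_right h1 k

/-- Weak Jensen-type inequality for Young functions, valid for arbitrary
(not necessarily measurable) integrands. -/
lemma weakJensen {α : Type*} [MeasurableSpace α] (μ : Measure α)
    {Φ : ℝ≥0∞ → ℝ≥0∞} (hΦ : IsYoung Φ) (g : α → ℝ≥0∞) {p : ℝ≥0∞}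
    (hp0 : p ≠ 0) (hpt : p ≠ ⊤)
    (h : ∫⁻ x, Φ (g x) ∂μ ≤ p * μ Set.univ) :
    ∫⁻ x, g x ∂μ ≤ 4 * ginv Φ p * μ Set.univ := by
  set w := ginv Φ p with hw
  have hw0 : w ≠ 0 := (ginv_pos_s17 hΦ hp0).ne'
  have hwt : w ≠ ⊤ := (ginv_lt_top_s17 hΦ hpt).ne
  set c := 2 * w with hc
  have hc0 : c ≠ 0 := mul_ne_zero (by norm_num) hw0
  have hct : c ≠ ⊤ := ENNReal.mul_ne_top (by norm_num) hwt
  have hwc : w < c := by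
    rw [hc]
    nth_rewrite 1 [← one_mul w]
    rw [mul_comm 1 w, mul_comm 2 w]
    exact (ENNReal.mul_lt_mul_iff_right hw0 hwt).2 one_lt_two
  have hΦc : p < Φ c := by
    rw [hw, ginv, if_neg hpt] at hwc
    obtain ⟨t, htS, htc⟩ := sInf_lt_iff.mp hwc
    exact htS.trans_le (hΦ.mono htc.le)
  have hpw : ∀ x1, p * g x1 ≤ p * c + c * Φ (g x1) := by
    intro x1
    rcases le_or_gt (g x1) c with hle | hlt
    · calc p * g x1 ≤ p * c := mul_le_mul_right hle p
      _ ≤ p * c + c * Φ (g x1) := le_self_add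
    · have hcross : g x1 * Φ c ≤ c * Φ (g x1) := slope_cross hΦ hc0 hct hlt.le
      calc p * g x1 ≤ Φ c * g x1 := mul_le_mul_left hΦc.le _
      _ = g x1 * Φ c := mul_comm _ _
      _ ≤ c * Φ (g x1) := hcross
      _ ≤ p * c + c * Φ (g x1) := le_add_self
  have hkey : p * ∫⁻ x, g x ∂μ ≤ p * (2 * c * μ Set.univ) := by
    calc p * ∫⁻ x, g x ∂μ = ∫⁻ x, p * g x ∂μ := (lintegral_const_mul' p g hpt).symm
    _ ≤ ∫⁻ x, (p * c + c * Φ (g x)) ∂μ := lintegral_mono hpw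
    _ = p * c * μ Set.univ + c * ∫⁻ x, Φ (g x) ∂μ := by
        rw [lintegral_add_left measurable_const, lintegral_const,
          lintegral_const_mul' c _ hct]
    _ ≤ p * c * μ Set.univ + c * (p * μ Set.univ) := by
        exact add_le_add_right (mul_le_mul_right h c) _
    _ = p * (2 * c * μ Set.univ) := by ring
  have := (ENNReal.mul_le_mul_iff_right hp0 hpt).mp hkey
  calc ∫⁻ x, g x ∂μ ≤ 2 * c * μ Set.univ := this
  _ = 4 * w * μ Set.univ := by rw [hc]; ring

/-- Key estimate: the average of `|f|` over a ball is controlled by the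
Orlicz–Morrey norm times `Φ⁻¹(φ(r))`. -/
lemma key1 {n : ℕ} {Φ : ℝ≥0∞ → ℝ≥0∞} (hΦ : IsYoung Φ) {φ : ℝ → ℝ}
    (hφpos : ∀ r : ℝ, 0 < r → 0 < φ r) (f : EuclideanSpace ℝ (Fin n) → ℝ)
    (hN0 : omNorm Φ φ f ≠ 0) (hNt : omNorm Φ φ f ≠ ⊤)
    (a : EuclideanSpace ℝ (Fin n)) (r : ℝ) (hr : 0 < r) :
    (volume (ball a r))⁻¹ * ∫⁻ y in ball a r, ENNReal.ofReal |f y| ≤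
      8 * omNorm Φ φ f * ginv Φ (ENNReal.ofReal (φ r)) := by
  set N := omNorm Φ φ f with hNdef
  have hball : ballNorm Φ φ f a r ≤ N := by
    rw [hNdef]; unfold omNorm
    exact le_iSup_of_le a (le_iSup_of_le r (le_iSup_of_le hr le_rfl))
  have hN2 : N < 2 * N := by
    nth_rewrite 1 [← one_mul N]
    rw [mul_comm 1 N, mul_comm 2 N]
    exact (ENNReal.mul_lt_mul_iff_right hN0 hNt).2 one_lt_two
  have h2N : ballNorm Φ φ f a r < 2 * N := hball.trans_lt hN2
  unfold ballNorm at h2N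
  obtain ⟨lam, ⟨hlam0, hcond⟩, hlam2⟩ := sInf_lt_iff.mp h2N
  set p := ENNReal.ofReal (φ r) with hp
  have hp0 : p ≠ 0 := (ENNReal.ofReal_pos.2 (hφpos r hr)).ne'
  have hpt : p ≠ ⊤ := ENNReal.ofReal_ne_top
  have hv0 : volume (ball a r) ≠ 0 := (measure_ball_pos volume a hr).ne'
  have hvt : volume (ball a r) ≠ ⊤ := measure_ball_lt_top.ne
  have h2Nt : 2 * N ≠ ⊤ := ENNReal.mul_ne_top (by norm_num) hNt
  have hlamt : lam ≠ ⊤ := (hlam2.trans h2Nt.lt_top).ne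
  set I := ∫⁻ y in ball a r, Φ (ENNReal.ofReal |f y| / lam) with hI
  have hcond2 : (volume (ball a r))⁻¹ * I ≤ p := by
    calc (volume (ball a r))⁻¹ * I
        = p * (p⁻¹ * ((volume (ball a r))⁻¹ * I)) := by
          rw [← mul_assoc, ENNReal.mul_inv_cancel hp0 hpt, one_mul]
    _ ≤ p * 1 := mul_le_mul_right hcond p
    _ = p := mul_one p
  have hint : I ≤ p * volume (ball a r) := by
    calc I = volume (ball a r) * ((volume (ball a r))⁻¹ * I) := by
          rw [← mul_assoc, ENNReal.mul_inv_cancel hv0 hvt, one_mul]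
    _ ≤ volume (ball a r) * p := mul_le_mul_right hcond2 _
    _ = p * volume (ball a r) := mul_comm _ _
  have hWJ := weakJensen (volume.restrict (ball a r)) hΦ
    (fun y => ENNReal.ofReal |f y| / lam) hp0 hpt
    (by rw [Measure.restrict_apply_univ]; exact hint)
  rw [Measure.restrict_apply_univ] at hWJ
  set If := ∫⁻ y in ball a r, ENNReal.ofReal |f y| with hIf
  have hdivint : If * lam⁻¹ ≤ 4 * ginv Φ p * volume (ball a r) := by
    rw [hIf, ← lintegral_mul_const' lam⁻¹ _ (ENNReal.inv_ne_top.2 hlam0.ne')]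
    simpa [div_eq_mul_inv] using hWJ
  have hIfle : If ≤ 4 * ginv Φ p * volume (ball a r) * lam := by
    calc If = If * lam⁻¹ * lam := by
          rw [mul_assoc, ENNReal.inv_mul_cancel hlam0.ne' hlamt, mul_one]
    _ ≤ 4 * ginv Φ p * volume (ball a r) * lam := mul_le_mul_left hdivint lam
  calc (volume (ball a r))⁻¹ * If
      ≤ (volume (ball a r))⁻¹ * (4 * ginv Φ p * volume (ball a r) * lam) :=
        mul_le_mul_right hIfle _
  _ = ((volume (ball a r))⁻¹ * volume (ball a r)) * (4 * ginv Φ p * lam) := by ring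
  _ = 4 * ginv Φ p * lam := by rw [ENNReal.inv_mul_cancel hv0 hvt, one_mul]
  _ ≤ 4 * ginv Φ p * (2 * N) := mul_le_mul_right hlam2.le _
  _ = 8 * N * ginv Φ p := by ring

/-- Main auxiliary lemma: the conclusion of the theorem follows from any
"case B" per-ball estimate. -/
lemma stmt17_aux {n : ℕ} (Φ Ψ : ℝ≥0∞ → ℝ≥0∞) (hΦ : IsYoung Φ) (hΨ : IsYoung Ψ)
    (φ : ℝ → ℝ) (hφpos : ∀ r : ℝ, 0 < r → 0 < φ r) (ρ : ℝ → ℝ)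
    (A : ℝ) (hA : 0 < A)
    (hAineq : ∀ r : ℝ, 0 < r →
      (⨆ t ∈ Set.Ioc (0 : ℝ) r, ENNReal.ofReal (ρ t)) * ginv Φ (ENNReal.ofReal (φ r)) ≤
        ENNReal.ofReal A * ginv Ψ (ENNReal.ofReal (φ r)))
    (KB : ℝ) (hKB : 0 < KB)
    (hB : ∀ r : ℝ, 0 < r → ∀ u : ℝ≥0∞, Φ u ≠ ⊤ → Φ u < ENNReal.ofReal (φ r) →
      (⨆ t ∈ Set.Ioc (0 : ℝ) r, ENNReal.ofReal (ρ t)) * u ≤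
        ENNReal.ofReal KB * ginv Ψ (Φ u)) :
    ∀ C₀ : ℝ, 0 < C₀ → ∃ C₁ : ℝ, 0 < C₁ ∧
      ∀ f : EuclideanSpace ℝ (Fin n) → ℝ,
        omNorm Φ φ f ≠ 0 → omNorm Φ φ f ≠ ⊤ →
        ∀ x : EuclideanSpace ℝ (Fin n),
          Ψ (Mrho ρ f x / (ENNReal.ofReal C₁ * omNorm Φ φ f)) ≤
            Φ (Mrho (fun _ => 1) f x / (ENNReal.ofReal C₀ * omNorm Φ φ f)) := by
  intro C₀ hC₀
  set K : ℝ := 8 * A + C₀ * KB + 1 with hKdef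
  have hKpos : 0 < K := by nlinarith [mul_pos hC₀ hKB]
  refine ⟨2 * K, by linarith, ?_⟩
  intro f hN0 hNt x
  set N := omNorm Φ φ f with hNdef
  set u := Mrho (fun _ => 1) f x / (ENNReal.ofReal C₀ * N) with hudef
  by_cases hG : Φ u = ⊤
  · rw [hG]; exact le_top
  -- basics
  have hC₀N0 : ENNReal.ofReal C₀ * N ≠ 0 :=
    mul_ne_zero (ENNReal.ofReal_pos.2 hC₀).ne' hN0
  have hC₀Nt : ENNReal.ofReal C₀ * N ≠ ⊤ := ENNReal.mul_ne_top ENNReal.ofReal_ne_top hNt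
  have hMf_eq : (ENNReal.ofReal C₀ * N) * u = Mrho (fun _ => 1) f x :=
    ENNReal.mul_div_cancel hC₀N0 hC₀Nt
  have key2 : ∀ (a : EuclideanSpace ℝ (Fin n)) (r : ℝ), 0 < r → x ∈ ball a r →
      (volume (ball a r))⁻¹ * ∫⁻ y in ball a r, ENNReal.ofReal |f y| ≤
        Mrho (fun _ => 1) f x := by
    intro a r hr hx
    have heq : (volume (ball a r))⁻¹ * ∫⁻ y in ball a r, ENNReal.ofReal |f y| =
        ENNReal.ofReal ((fun _ => (1:ℝ)) r) *
          ((volume (ball a r))⁻¹ * ∫⁻ y in ball a r, ENNReal.ofReal |f y|) := by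
      simp
    rw [heq]; unfold Mrho
    exact le_iSup_of_le a (le_iSup_of_le r (le_iSup_of_le hr (le_iSup_of_le hx le_rfl)))
  -- main per-ball bound
  have hMain : ∀ (a : EuclideanSpace ℝ (Fin n)) (r : ℝ), 0 < r → x ∈ ball a r →
      ENNReal.ofReal (ρ r) *
          ((volume (ball a r))⁻¹ * ∫⁻ y in ball a r, ENNReal.ofReal |f y|) ≤
        (ENNReal.ofReal K * N) * ginv Ψ (Φ u) := by
    intro a r hr hx
    set m := (volume (ball a r))⁻¹ * ∫⁻ y in ball a r, ENNReal.ofReal |f y| with hm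
    set rb := ⨆ t ∈ Set.Ioc (0 : ℝ) r, ENNReal.ofReal (ρ t) with hrb
    have hrb1 : ENNReal.ofReal (ρ r) ≤ rb :=
      le_biSup (fun t => ENNReal.ofReal (ρ t)) (Set.mem_Ioc.2 ⟨hr, le_rfl⟩)
    rcases le_or_gt (ENNReal.ofReal (φ r)) (Φ u) with hcase | hcase
    · -- case A : φ(r) ≤ Φ(u)
      have h8A : (8 : ℝ≥0∞) * ENNReal.ofReal A ≤ ENNReal.ofReal K := by
        rw [show (8 : ℝ≥0∞) = ENNReal.ofReal 8 by simp, ← ENNReal.ofReal_mul (by norm_num)]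
        exact ENNReal.ofReal_le_ofReal (by nlinarith)
      calc ENNReal.ofReal (ρ r) * m ≤ rb * m := mul_le_mul_left hrb1 m
      _ ≤ rb * (8 * N * ginv Φ (ENNReal.ofReal (φ r))) :=
          mul_le_mul_right (key1 hΦ hφpos f hN0 hNt a r hr) rb
      _ = (8 * N) * (rb * ginv Φ (ENNReal.ofReal (φ r))) := by ring
      _ ≤ (8 * N) * (ENNReal.ofReal A * ginv Ψ (ENNReal.ofReal (φ r))) :=
          mul_le_mul_right (hAineq r hr) _
      _ ≤ (8 * N) * (ENNReal.ofReal A * ginv Ψ (Φ u)) :=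
          mul_le_mul_right (mul_le_mul_right (ginv_mono_s17 Ψ hcase) _) _
      _ = (8 * ENNReal.ofReal A) * (N * ginv Ψ (Φ u)) := by ring
      _ ≤ ENNReal.ofReal K * (N * ginv Ψ (Φ u)) := mul_le_mul_left h8A _
      _ = (ENNReal.ofReal K * N) * ginv Ψ (Φ u) := by ring
    · -- case B : Φ(u) < φ(r)
      have hBr := hB r hr u hG hcase
      have hKBK : ENNReal.ofReal KB * ENNReal.ofReal C₀ ≤ ENNReal.ofReal K := by
        rw [← ENNReal.ofReal_mul hKB.le]
        exact ENNReal.ofReal_le_ofReal (by nlinarith)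
      calc ENNReal.ofReal (ρ r) * m ≤ rb * m := mul_le_mul_left hrb1 m
      _ ≤ rb * Mrho (fun _ => 1) f x := mul_le_mul_right (key2 a r hr hx) rb
      _ = rb * ((ENNReal.ofReal C₀ * N) * u) := by rw [hMf_eq]
      _ = (rb * u) * (ENNReal.ofReal C₀ * N) := by ring
      _ ≤ (ENNReal.ofReal KB * ginv Ψ (Φ u)) * (ENNReal.ofReal C₀ * N) :=
          mul_le_mul_left hBr _
      _ = (ENNReal.ofReal KB * ENNReal.ofReal C₀) * (N * ginv Ψ (Φ u)) := by ring
      _ ≤ ENNReal.ofReal K * (N * ginv Ψ (Φ u)) := mul_le_mul_left hKBK _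
      _ = (ENNReal.ofReal K * N) * ginv Ψ (Φ u) := by ring
  have hsup : Mrho ρ f x ≤ (ENNReal.ofReal K * N) * ginv Ψ (Φ u) := by
    unfold Mrho
    exact iSup_le fun a => iSup_le fun r => iSup_le fun hr => iSup_le fun hx =>
      hMain a r hr hx
  set D := ENNReal.ofReal K * N with hD
  have hD0 : D ≠ 0 := mul_ne_zero (ENNReal.ofReal_pos.2 hKpos).ne' hN0
  have hDt : D ≠ ⊤ := ENNReal.mul_ne_top ENNReal.ofReal_ne_top hNt
  have hC1 : ENNReal.ofReal (2 * K) * N = 2 * D := by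
    rw [ENNReal.ofReal_mul (by norm_num : (0:ℝ) ≤ 2), hD,
      show ENNReal.ofReal 2 = 2 by simp]
    ring
  have hdiv : Mrho ρ f x / (ENNReal.ofReal (2 * K) * N) ≤ ginv Ψ (Φ u) / 2 := by
    rw [hC1]
    calc Mrho ρ f x / (2 * D) ≤ (D * ginv Ψ (Φ u)) / (2 * D) :=
        ENNReal.div_le_div_right hsup _
    _ = (ginv Ψ (Φ u) * D) / (2 * D) := by rw [mul_comm D]
    _ = ginv Ψ (Φ u) / 2 := ENNReal.mul_div_mul_right _ 2 hD0 hDt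
  by_cases hg0 : ginv Ψ (Φ u) = 0
  · have hx0 : Mrho ρ f x / (ENNReal.ofReal (2 * K) * N) = 0 :=
      le_antisymm (by simpa [hg0] using hdiv) (zero_le)
    rw [hx0, hΨ.zero]
    exact zero_le
  · exact le_of_lt_ginv hG
      (hdiv.trans_lt (ENNReal.half_lt_self hg0 (ginv_lt_top_s17 hΨ hG).ne))

/-- pointwise domination of the generalized fractional maximal operator
by the Hardy–Littlewood maximal operator through the Young functions `Φ, Ψ`. -/
theorem stmt17 {n : ℕ} (Φ Ψ : ℝ≥0∞ → ℝ≥0∞) (hΦ : IsYoung Φ) (hΨ : IsYoung Ψ)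
    (φ : ℝ → ℝ) (hφ : Gdec n φ) (ρ : ℝ → ℝ) (hρ : ∀ r : ℝ, 0 < r → 0 < ρ r)
    (halt : Filter.Tendsto φ Filter.atTop (nhds 0) ∨
      ∃ C : ℝ, 0 < C ∧ ∀ u v : ℝ≥0∞, 0 < u → u < v → v ≠ ⊤ →
        ginv Ψ v / ginv Φ v ≤ ENNReal.ofReal C * (ginv Ψ u / ginv Φ u))
    (A : ℝ) (hA : 0 < A)
    (hAineq : ∀ r : ℝ, 0 < r →
      (⨆ t ∈ Set.Ioc (0 : ℝ) r, ENNReal.ofReal (ρ t)) * ginv Φ (ENNReal.ofReal (φ r)) ≤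
        ENNReal.ofReal A * ginv Ψ (ENNReal.ofReal (φ r))) :
    ∀ C₀ : ℝ, 0 < C₀ → ∃ C₁ : ℝ, 0 < C₁ ∧
      ∀ f : EuclideanSpace ℝ (Fin n) → ℝ,
        omNorm Φ φ f ≠ 0 → omNorm Φ φ f ≠ ⊤ →
        ∀ x : EuclideanSpace ℝ (Fin n),
          Ψ (Mrho ρ f x / (ENNReal.ofReal C₁ * omNorm Φ φ f)) ≤
            Φ (Mrho (fun _ => 1) f x / (ENNReal.ofReal C₀ * omNorm Φ φ f)) := by
  have hφpos := hφ.1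
  rcases halt with h1 | ⟨Ce, hCe0, hCe⟩
  · -- Case: φ → 0 at infinity
    obtain ⟨Ci, hCi0, hCi⟩ := hφ.2.2
    set ε : ℝ := min ((Ci * 2 ^ n)⁻¹) 1 with hεdef
    have hε0 : 0 < ε := lt_min (by positivity) one_pos
    have hε1 : ε ≤ 1 := min_le_right _ _
    refine stmt17_aux Φ Ψ hΦ hΨ φ hφpos ρ A hA hAineq (A / ε) (div_pos hA hε0) ?_
    intro r hr u hGt hlt
    by_cases hG0 : Φ u = 0
    · rw [hG0, ginv, if_neg (ENNReal.zero_ne_top)]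
      refine le_mul_sInf (ENNReal.ofReal_pos.2 (div_pos hA hε0)).ne'
        ENNReal.ofReal_ne_top ?_
      intro t ht
      have ht' : (0 : ℝ≥0∞) < Ψ t := ht
      obtain ⟨s, hrs, hs⟩ : ∃ s, r ≤ s ∧ ENNReal.ofReal (φ s) < Ψ t := by
        by_cases hψt : Ψ t = ⊤
        · exact ⟨r, le_rfl, by rw [hψt]; exact ENNReal.ofReal_lt_top⟩
        · have hδ : 0 < (Ψ t).toReal := ENNReal.toReal_pos ht'.ne' hψt
          obtain ⟨s, hs1, hs2⟩ :=
            ((h1.eventually (gt_mem_nhds hδ)).and (eventually_ge_atTop r)).exists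
          refine ⟨s, hs2, ?_⟩
          rw [← ENNReal.ofReal_toReal hψt]
          exact (ENNReal.ofReal_lt_ofReal_iff hδ).2 hs1
      have hs0 : 0 < s := lt_of_lt_of_le hr hrs
      have hub : u ≤ ginv Φ (ENNReal.ofReal (φ s)) :=
        le_ginv hΦ.mono (by rw [hG0]; exact zero_le)
      calc (⨆ w ∈ Set.Ioc (0:ℝ) r, ENNReal.ofReal (ρ w)) * u
          ≤ (⨆ w ∈ Set.Ioc (0:ℝ) s, ENNReal.ofReal (ρ w)) *
            ginv Φ (ENNReal.ofReal (φ s)) :=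
            mul_le_mul' (biSup_mono fun w hw => ⟨hw.1, hw.2.trans hrs⟩) hub
      _ ≤ ENNReal.ofReal A * ginv Ψ (ENNReal.ofReal (φ s)) := hAineq s hs0
      _ ≤ ENNReal.ofReal A * t :=
          mul_le_mul_right (ginv_le ENNReal.ofReal_ne_top hs) _
      _ ≤ ENNReal.ofReal (A / ε) * t := by
          refine mul_le_mul_left (ENNReal.ofReal_le_ofReal ?_) t
          rw [le_div_iff₀ hε0]; nlinarith
    · -- Φ u ≠ 0
      set S : Set ℝ := {s : ℝ | r ≤ s ∧ Φ u < ENNReal.ofReal (φ s)} with hSdef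
      have hrS : r ∈ S := ⟨le_rfl, hlt⟩
      have hδ : 0 < (Φ u).toReal := ENNReal.toReal_pos hG0 hGt
      obtain ⟨R, hR⟩ := eventually_atTop.mp (h1.eventually (gt_mem_nhds hδ))
      have hbdd : BddAbove S := by
        refine ⟨R, fun s hs => ?_⟩
        by_contra hc
        push_neg at hc
        have h2 : ENNReal.ofReal (φ s) < Φ u := by
          rw [← ENNReal.ofReal_toReal hGt]
          exact (ENNReal.ofReal_lt_ofReal_iff hδ).2 (hR s hc.le)
        exact absurd hs.2 h2.asymm
      have hrstar : r ≤ sSup S := le_csSup hbdd hrS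
      have hstar0 : 0 < sSup S := lt_of_lt_of_le hr hrstar
      obtain ⟨s'', hs''S, hs''half⟩ :=
        exists_lt_of_lt_csSup ⟨r, hrS⟩ (half_lt_self hstar0)
      have hs''r : r ≤ s'' := hs''S.1
      have hs''0 : 0 < s'' := lt_of_lt_of_le hr hs''r
      set s : ℝ := 2 * s'' with hsdef
      have hrs : r ≤ s := by rw [hsdef]; linarith
      have hs0 : 0 < s := by rw [hsdef]; linarith
      have hsgt : sSup S < s := by rw [hsdef]; linarith
      have hs_not : s ∉ S := fun h => absurd (le_csSup hbdd h) hsgt.not_ge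
      have hφs_le : ENNReal.ofReal (φ s) ≤ Φ u := not_lt.1 fun h => hs_not ⟨hrs, h⟩
      have hgrow : φ s'' * s'' ^ n ≤ Ci * (φ s * s ^ n) :=
        hCi s'' s hs''0 (by rw [hsdef]; linarith)
      have hφs'' : φ s'' ≤ (Ci * 2 ^ n) * φ s := by
        have hsn : s ^ n = 2 ^ n * s'' ^ n := by rw [hsdef, mul_pow]
        rw [hsn] at hgrow
        have hpow : (0:ℝ) < s'' ^ n := pow_pos hs''0 n
        nlinarith [hgrow, hpow]
      have hεs : ε * φ s'' ≤ φ s := by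
        have hc2 : (0:ℝ) < Ci * 2 ^ n := by positivity
        have hεle : ε ≤ (Ci * 2 ^ n)⁻¹ := min_le_left _ _
        have hφ''0 : 0 < φ s'' := hφpos s'' hs''0
        calc ε * φ s'' ≤ (Ci * 2 ^ n)⁻¹ * φ s'' :=
            mul_le_mul_of_nonneg_right hεle hφ''0.le
        _ ≤ (Ci * 2 ^ n)⁻¹ * ((Ci * 2 ^ n) * φ s) :=
            mul_le_mul_of_nonneg_left hφs'' (by positivity)
        _ = φ s := by field_simp
      have hεG : ENNReal.ofReal ε * Φ u ≤ ENNReal.ofReal (φ s) := by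
        calc ENNReal.ofReal ε * Φ u ≤ ENNReal.ofReal ε * ENNReal.ofReal (φ s'') :=
            mul_le_mul_right hs''S.2.le _
        _ = ENNReal.ofReal (ε * φ s'') := (ENNReal.ofReal_mul hε0.le).symm
        _ ≤ ENNReal.ofReal (φ s) := ENNReal.ofReal_le_ofReal hεs
      have hconv : Φ (ENNReal.ofReal ε * u) ≤ ENNReal.ofReal ε * Φ u := by
        have hcoe : ((ε.toNNReal : ℝ≥0) : ℝ≥0∞) = ENNReal.ofReal ε := rfl
        rw [← hcoe]
        refine young_smul hΦ _ ?_ u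
        rw [← Real.toNNReal_one]
        exact Real.toNNReal_le_toNNReal hε1
      have hub : ENNReal.ofReal ε * u ≤ ginv Φ (ENNReal.ofReal (φ s)) :=
        le_ginv hΦ.mono (hconv.trans hεG)
      have hchain : (⨆ w ∈ Set.Ioc (0:ℝ) r, ENNReal.ofReal (ρ w)) *
          (ENNReal.ofReal ε * u) ≤ ENNReal.ofReal A * ginv Ψ (Φ u) := by
        calc (⨆ w ∈ Set.Ioc (0:ℝ) r, ENNReal.ofReal (ρ w)) * (ENNReal.ofReal ε * u)
            ≤ (⨆ w ∈ Set.Ioc (0:ℝ) s, ENNReal.ofReal (ρ w)) *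
              ginv Φ (ENNReal.ofReal (φ s)) :=
            mul_le_mul' (biSup_mono fun w hw => ⟨hw.1, hw.2.trans hrs⟩) hub
        _ ≤ ENNReal.ofReal A * ginv Ψ (ENNReal.ofReal (φ s)) := hAineq s hs0
        _ ≤ ENNReal.ofReal A * ginv Ψ (Φ u) :=
            mul_le_mul_right (ginv_mono_s17 Ψ hφs_le) _
      have hεne : ENNReal.ofReal ε ≠ 0 := (ENNReal.ofReal_pos.2 hε0).ne'
      calc (⨆ w ∈ Set.Ioc (0:ℝ) r, ENNReal.ofReal (ρ w)) * u
          = (ENNReal.ofReal ε)⁻¹ *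
            ((⨆ w ∈ Set.Ioc (0:ℝ) r, ENNReal.ofReal (ρ w)) * (ENNReal.ofReal ε * u)) := by
            rw [show (⨆ w ∈ Set.Ioc (0:ℝ) r, ENNReal.ofReal (ρ w)) * (ENNReal.ofReal ε * u)
              = ENNReal.ofReal ε * ((⨆ w ∈ Set.Ioc (0:ℝ) r, ENNReal.ofReal (ρ w)) * u) by ring,
              ← mul_assoc, ENNReal.inv_mul_cancel hεne ENNReal.ofReal_ne_top, one_mul]
      _ ≤ (ENNReal.ofReal ε)⁻¹ * (ENNReal.ofReal A * ginv Ψ (Φ u)) :=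
          mul_le_mul_right hchain _
      _ = ENNReal.ofReal (A / ε) * ginv Ψ (Φ u) := by
          rw [div_eq_mul_inv, ENNReal.ofReal_mul hA.le, ENNReal.ofReal_inv_of_pos hε0]
          ring
  · -- Case: Ψ⁻¹/Φ⁻¹ almost decreasing
    refine stmt17_aux Φ Ψ hΦ hΨ φ hφpos ρ A hA hAineq (A * Ce) (mul_pos hA hCe0) ?_
    intro r hr u hGt hlt
    rw [ginv, if_neg hGt]
    refine le_mul_sInf (ENNReal.ofReal_pos.2 (mul_pos hA hCe0)).ne'
      ENNReal.ofReal_ne_top ?_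
    intro t ht
    have ht' : Φ u < Ψ t := ht
    obtain ⟨v', hv1, hv2⟩ := exists_between (lt_min hlt ht')
    have hv'0 : v' ≠ 0 := (lt_of_le_of_lt (zero_le) hv1).ne'
    have hv'p : v' < ENNReal.ofReal (φ r) := hv2.trans_le (min_le_left _ _)
    have hv'Ψ : v' < Ψ t := hv2.trans_le (min_le_right _ _)
    have hv't : v' ≠ ⊤ := (hv'p.trans ENNReal.ofReal_lt_top).ne
    have hratio := hCe v' (ENNReal.ofReal (φ r))
      (lt_of_le_of_lt (zero_le) hv1) hv'p ENNReal.ofReal_ne_top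
    have hp0 : ENNReal.ofReal (φ r) ≠ 0 := (lt_of_le_of_lt (zero_le) hlt).ne'
    have hb0 : ginv Φ v' ≠ 0 := (ginv_pos_s17 hΦ hv'0).ne'
    have hBt : ginv Φ (ENNReal.ofReal (φ r)) ≠ ⊤ :=
      (ginv_lt_top_s17 hΦ ENNReal.ofReal_ne_top).ne
    have hbB : ginv Φ v' ≤ ginv Φ (ENNReal.ofReal (φ r)) := ginv_mono_s17 Φ hv'p.le
    have hbt : ginv Φ v' ≠ ⊤ := (hbB.trans_lt hBt.lt_top).ne
    have hB0 : ginv Φ (ENNReal.ofReal (φ r)) ≠ 0 := (ginv_pos_s17 hΦ hp0).ne'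
    have hstep1 : ginv Ψ (ENNReal.ofReal (φ r)) ≤
        ENNReal.ofReal Ce * (ginv Ψ v' / ginv Φ v') * ginv Φ (ENNReal.ofReal (φ r)) :=
      (ENNReal.div_le_iff hB0 hBt).mp hratio
    have hstep2 : ginv Ψ (ENNReal.ofReal (φ r)) * ginv Φ v' ≤
        ENNReal.ofReal Ce * ginv Ψ v' * ginv Φ (ENNReal.ofReal (φ r)) := by
      calc ginv Ψ (ENNReal.ofReal (φ r)) * ginv Φ v'
          ≤ (ENNReal.ofReal Ce * (ginv Ψ v' / ginv Φ v') *
              ginv Φ (ENNReal.ofReal (φ r))) * ginv Φ v' :=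
            mul_le_mul_left hstep1 _
      _ = ENNReal.ofReal Ce * (ginv Ψ v' / ginv Φ v' * ginv Φ v') *
            ginv Φ (ENNReal.ofReal (φ r)) := by ring
      _ = ENNReal.ofReal Ce * ginv Ψ v' * ginv Φ (ENNReal.ofReal (φ r)) := by
            rw [ENNReal.div_mul_cancel hb0 hbt]
    have hstep3 : ((⨆ w ∈ Set.Ioc (0:ℝ) r, ENNReal.ofReal (ρ w)) * ginv Φ v') *
        ginv Φ (ENNReal.ofReal (φ r)) ≤
        (ENNReal.ofReal A * (ENNReal.ofReal Ce * ginv Ψ v')) *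
          ginv Φ (ENNReal.ofReal (φ r)) := by
      calc ((⨆ w ∈ Set.Ioc (0:ℝ) r, ENNReal.ofReal (ρ w)) * ginv Φ v') *
          ginv Φ (ENNReal.ofReal (φ r))
          = ((⨆ w ∈ Set.Ioc (0:ℝ) r, ENNReal.ofReal (ρ w)) *
              ginv Φ (ENNReal.ofReal (φ r))) * ginv Φ v' := by ring
      _ ≤ (ENNReal.ofReal A * ginv Ψ (ENNReal.ofReal (φ r))) * ginv Φ v' :=
          mul_le_mul_left (hAineq r hr) _
      _ = ENNReal.ofReal A * (ginv Ψ (ENNReal.ofReal (φ r)) * ginv Φ v') := by ring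
      _ ≤ ENNReal.ofReal A *
            (ENNReal.ofReal Ce * ginv Ψ v' * ginv Φ (ENNReal.ofReal (φ r))) :=
          mul_le_mul_right hstep2 _
      _ = (ENNReal.ofReal A * (ENNReal.ofReal Ce * ginv Ψ v')) *
            ginv Φ (ENNReal.ofReal (φ r)) := by ring
    have hstep4 := (ENNReal.mul_le_mul_iff_left hB0 hBt).mp hstep3
    have hu : u ≤ ginv Φ v' := le_ginv hΦ.mono hv1.le
    have hat : ginv Ψ v' ≤ t := ginv_le hv't hv'Ψ
    calc (⨆ w ∈ Set.Ioc (0:ℝ) r, ENNReal.ofReal (ρ w)) * u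
        ≤ (⨆ w ∈ Set.Ioc (0:ℝ) r, ENNReal.ofReal (ρ w)) * ginv Φ v' :=
          mul_le_mul_right hu _
    _ ≤ ENNReal.ofReal A * (ENNReal.ofReal Ce * ginv Ψ v') := hstep4
    _ ≤ ENNReal.ofReal A * (ENNReal.ofReal Ce * t) :=
        mul_le_mul_right (mul_le_mul_right hat _) _
    _ = ENNReal.ofReal (A * Ce) * t := by rw [ENNReal.ofReal_mul hA.le]; ring

end
end
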